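/- arXiv:2002.08106 — 6 statements merged into one kernel-verified Lean document; each statement's English description precedes it below -/
import Mathlib

section
/- Let n ≥ 1 and let W ∈ ℝ^{n×n}. The discrete-time protocol x(t+1) = W x(t) reaches average consensus from every initial condition — i.e., for every x(0) ∈ ℝⁿ, lim_{t→∞} Wᵗ x(0) = ((1ᵀx(0))/n)·1 — if and only if W1 = 1, Wᵀ1 = 1, and ρ(W − (1/n)11ᵀ) < 1. -/
open Matrix Filter Topology ENNReal NNReal

/-- Spectral radius of a real matrix: the maximum modulus of its complex eigenvalues. -/
noncomputable def specRad {n : ℕ} (A : Matrix (Fin n) (Fin n) ℝ) : ℝ :=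
  sSup {r : ℝ | ∃ μ : ℂ, μ ∈ spectrum ℂ (A.map Complex.ofReal) ∧ r = ‖μ‖}

/-- Induced 2-norm (largest singular value) of a real matrix. -/
noncomputable def ind2norm {n : ℕ} (A : Matrix (Fin n) (Fin n) ℝ) : ℝ :=
  ‖Matrix.toEuclideanCLM (𝕜 := ℝ) A‖

/-- The matrix (1/n)·11ᵀ, with every entry 1/n. -/
noncomputable def Jmat (n : ℕ) : Matrix (Fin n) (Fin n) ℝ :=
  Matrix.of fun _ _ => (1 : ℝ) / n

attribute [local instance] Matrix.linftyOpNormedRing Matrix.linftyOpNormedAlgebra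

namespace AvgConsensus

variable {n : ℕ}

lemma nnnorm_entry_le (M : Matrix (Fin n) (Fin n) ℂ) (i j : Fin n) : ‖M i j‖₊ ≤ ‖M‖₊ := by
  rw [Matrix.linfty_opNNNorm_def]
  calc ‖M i j‖₊ ≤ ∑ k, ‖M i k‖₊ :=
        Finset.single_le_sum (f := fun k => ‖M i k‖₊) (fun k _ => zero_le) (Finset.mem_univ j)
    _ ≤ _ := Finset.le_sup (f := fun i => ∑ k, ‖M i k‖₊) (Finset.mem_univ i)

lemma map_pow_ofReal (A : Matrix (Fin n) (Fin n) ℝ) (t : ℕ) :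
    (A.map Complex.ofReal) ^ t = (A ^ t).map Complex.ofReal := by
  have h : ∀ B : Matrix (Fin n) (Fin n) ℝ, B.map Complex.ofReal =
      (Complex.ofRealHom.mapMatrix : Matrix (Fin n) (Fin n) ℝ →+* _) B := fun _ => rfl
  rw [h, h, ← map_pow]

/-- Entrywise convergence of powers to zero, from `specRad < 1`. -/
lemma pow_entry_tendsto_zero (hn : 1 ≤ n) (A : Matrix (Fin n) (Fin n) ℝ)
    (hA : specRad A < 1) (i j : Fin n) :
    Tendsto (fun t : ℕ => (A ^ t) i j) atTop (𝓝 0) := by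
  have : Nonempty (Fin n) := Fin.pos_iff_nonempty.mp hn
  set M : Matrix (Fin n) (Fin n) ℂ := A.map Complex.ofReal with hM
  -- spectral radius (ENNReal) is < 1
  have hbdd : BddAbove {r : ℝ | ∃ μ : ℂ, μ ∈ spectrum ℂ M ∧ r = ‖μ‖} := by
    have : {r : ℝ | ∃ μ : ℂ, μ ∈ spectrum ℂ M ∧ r = ‖μ‖}
        = (‖·‖) '' (spectrum ℂ M) := by
      ext r; constructor
      · rintro ⟨μ, hμ, rfl⟩; exact ⟨μ, hμ, rfl⟩
      · rintro ⟨μ, hμ, rfl⟩; exact ⟨μ, hμ, rfl⟩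
    rw [this]
    exact ((Matrix.finite_spectrum M).image _).bddAbove
  have hsr : spectralRadius ℂ M < 1 := by
    have hle : spectralRadius ℂ M ≤ ENNReal.ofReal (specRad A) := by
      rw [spectralRadius]
      refine iSup₂_le fun μ hμ => ?_
      have h1 : ‖μ‖ ≤ specRad A := le_csSup hbdd ⟨μ, hμ, rfl⟩
      calc (‖μ‖₊ : ℝ≥0∞) = ENNReal.ofReal ‖μ‖ := by
            rw [ENNReal.ofReal, Real.toNNReal_of_nonneg (norm_nonneg _)]
            norm_cast
        _ ≤ _ := ENNReal.ofReal_le_ofReal h1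
    exact lt_of_le_of_lt hle (ENNReal.ofReal_lt_one.mpr hA)
  -- Gelfand
  have hG := spectrum.pow_nnnorm_pow_one_div_tendsto_nhds_spectralRadius M
  obtain ⟨r, hr1, hr2⟩ := exists_between hsr
  have hrtop : r ≠ ⊤ := ne_top_of_lt hr2
  have hev : ∀ᶠ t : ℕ in atTop, (‖M ^ t‖₊ : ℝ≥0∞) ^ (1 / (t : ℝ)) < r :=
    hG.eventually_lt_const hr1
  -- get real r
  set s : ℝ := r.toReal with hs
  have hs1 : s < 1 := by
    rw [hs]
    exact (ENNReal.toReal_lt_toReal hrtop one_ne_top).mpr hr2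
  have hs0 : 0 ≤ s := ENNReal.toReal_nonneg
  have key : ∀ᶠ t : ℕ in atTop, ‖(A ^ t) i j‖ ≤ s ^ t := by
    filter_upwards [hev, Filter.eventually_gt_atTop 0] with t ht ht0
    have htne : (t : ℝ) ≠ 0 := Nat.cast_ne_zero.mpr ht0.ne'
    -- from (‖M^t‖₊)^(1/t) < r deduce ‖M^t‖₊ ≤ r^t
    have h2 : (‖M ^ t‖₊ : ℝ≥0∞) ≤ r ^ t := by
      have := ENNReal.rpow_le_rpow ht.le (by positivity : (0:ℝ) ≤ (t:ℝ))
      rwa [← ENNReal.rpow_mul, one_div, inv_mul_cancel₀ htne, ENNReal.rpow_one,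
        ENNReal.rpow_natCast] at this

    have h3 : ‖M ^ t‖ ≤ s ^ t := by
      have := ENNReal.toReal_mono (ENNReal.pow_ne_top hrtop) h2
      rwa [ENNReal.coe_toReal, coe_nnnorm, ENNReal.toReal_pow] at this
    have h4 : ‖(M ^ t) i j‖ ≤ ‖M ^ t‖ := nnnorm_entry_le (M ^ t) i j
    have h5 : (M ^ t) i j = Complex.ofReal ((A ^ t) i j) := by
      rw [hM, map_pow_ofReal]; rfl
    calc ‖(A ^ t) i j‖ = ‖(M ^ t) i j‖ := by rw [h5, Complex.norm_real]
      _ ≤ ‖M ^ t‖ := h4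
      _ ≤ s ^ t := h3
  exact squeeze_zero_norm' key (tendsto_pow_atTop_nhds_zero_of_lt_one hs0 hs1)


lemma Jmat_mulVec (hn : 1 ≤ n) (x : Fin n → ℝ) :
    (Jmat n).mulVec x = fun _ => (∑ i, x i) / n := by
  funext i
  simp only [Matrix.mulVec, dotProduct, Jmat, Matrix.of_apply]
  rw [Finset.sum_div]
  refine Finset.sum_congr rfl fun k _ => ?_
  ring

lemma WJ_eq {W : Matrix (Fin n) (Fin n) ℝ}
    (hW : W.mulVec (fun _ => 1) = (fun _ => 1)) : W * Jmat n = Jmat n := by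
  ext i j
  have h := congrFun hW i
  simp only [Matrix.mulVec, dotProduct, mul_one] at h
  simp only [Matrix.mul_apply, Jmat, Matrix.of_apply]
  rw [← Finset.sum_mul, h, one_mul]

lemma JW_eq {W : Matrix (Fin n) (Fin n) ℝ}
    (hW : Wᵀ.mulVec (fun _ => 1) = (fun _ => 1)) : Jmat n * W = Jmat n := by
  ext i j
  have h := congrFun hW j
  simp only [Matrix.mulVec, dotProduct, mul_one, Matrix.transpose_apply] at h
  simp only [Matrix.mul_apply, Jmat, Matrix.of_apply]
  calc ∑ k, 1 / (n:ℝ) * W k j = (∑ k, W k j) / n := by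
        rw [Finset.sum_div]; exact Finset.sum_congr rfl fun k _ => by ring
    _ = 1 / n := by rw [h]

lemma J_mul_J (hn : 1 ≤ n) : Jmat n * Jmat n = Jmat n := by
  have hn0 : (n : ℝ) ≠ 0 := Nat.cast_ne_zero.mpr (by omega)
  ext i j
  simp only [Matrix.mul_apply, Jmat, Matrix.of_apply, Finset.sum_const, Finset.card_univ,
    Fintype.card_fin, nsmul_eq_mul]
  field_simp

lemma pow_mul_J {W : Matrix (Fin n) (Fin n) ℝ} (h : W * Jmat n = Jmat n) (t : ℕ) :
    W ^ t * Jmat n = Jmat n := by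
  induction t with
  | zero => simp
  | succ t ih => rw [pow_succ, mul_assoc, h, ih]

lemma sub_pow_eq (hn : 1 ≤ n) {W : Matrix (Fin n) (Fin n) ℝ}
    (hWJ : W * Jmat n = Jmat n) (hJW : Jmat n * W = Jmat n) {t : ℕ} (ht : 1 ≤ t) :
    (W - Jmat n) ^ t = W ^ t - Jmat n := by
  induction t with
  | zero => omega
  | succ t ih =>
    rcases Nat.eq_or_lt_of_le ht with h1 | h1
    · simp [← h1]
    · have ht' : 1 ≤ t := by omega
      rw [pow_succ, ih ht', sub_mul, mul_sub, mul_sub, pow_mul_J hWJ, hJW,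
        J_mul_J hn, pow_succ]
      abel

lemma abs_lt_one_of_pow_tendsto {M : Matrix (Fin n) (Fin n) ℂ}
    (h : ∀ i j, Tendsto (fun t : ℕ => (M ^ t) i j) atTop (𝓝 0)) {μ : ℂ}
    (hμ : μ ∈ spectrum ℂ M) : ‖μ‖ < 1 := by
  rw [spectrum.mem_iff] at hμ
  have hdet : (algebraMap ℂ (Matrix (Fin n) (Fin n) ℂ) μ - M).det = 0 := by
    by_contra hd
    exact hμ ((Matrix.isUnit_iff_isUnit_det _).mpr (isUnit_iff_ne_zero.mpr hd))
  obtain ⟨v, hv0, hv⟩ := (Matrix.exists_mulVec_eq_zero_iff).mpr hdet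
  have hMv : M.mulVec v = μ • v := by
    rw [Algebra.algebraMap_eq_smul_one, Matrix.sub_mulVec, Matrix.smul_mulVec,
      Matrix.one_mulVec] at hv
    have := sub_eq_zero.mp hv
    exact this.symm
  have hpow : ∀ t : ℕ, (M ^ t).mulVec v = (μ ^ t) • v := by
    intro t
    induction t with
    | zero => simp [Matrix.one_mulVec]
    | succ t ih =>
      rw [pow_succ, ← Matrix.mulVec_mulVec, hMv, Matrix.mulVec_smul, ih,
        smul_smul, pow_succ, mul_comm]
  obtain ⟨i, hvi⟩ := Function.ne_iff.mp hv0
  have hlim : Tendsto (fun t : ℕ => ((M ^ t).mulVec v) i) atTop (𝓝 0) := by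
    have : ∀ t : ℕ, ((M ^ t).mulVec v) i = ∑ k, (M ^ t) i k * v k := fun t => rfl
    simp only [this]
    have h0 : (0 : ℂ) = ∑ k : Fin n, 0 * v k := by simp
    rw [h0]
    exact tendsto_finset_sum _ fun k _ => (h i k).mul_const (v k)
  simp only [hpow, Pi.smul_apply, smul_eq_mul] at hlim
  have hlim2 : Tendsto (fun t : ℕ => μ ^ t) atTop (𝓝 0) := by
    have := hlim.mul_const (v i)⁻¹
    simp only [zero_mul, mul_assoc, mul_inv_cancel₀ hvi, mul_one] at this
    exact this
  by_contra hc
  push_neg at hc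
  have h1 : ∀ t : ℕ, (1:ℝ) ≤ ‖μ ^ t‖ := fun t => by
    rw [norm_pow]
    exact one_le_pow₀ hc
  have h2 : Tendsto (fun t : ℕ => ‖μ ^ t‖) atTop (𝓝 0) := by simpa using hlim2.norm
  have h3 : ∀ᶠ t : ℕ in atTop, ‖μ ^ t‖ < 1 := h2.eventually_lt_const one_pos
  obtain ⟨t, ht⟩ := h3.exists
  exact absurd (h1 t) (not_le.mpr ht)

end AvgConsensus

theorem average_consensus_iff (n : ℕ) (hn : 1 ≤ n) (W : Matrix (Fin n) (Fin n) ℝ) :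
    (∀ x0 : Fin n → ℝ,
      Tendsto (fun t : ℕ => (W ^ t).mulVec x0) atTop
        (nhds (fun _ => (∑ i, x0 i) / n))) ↔
    (W.mulVec (fun _ => 1) = (fun _ => 1) ∧
     Wᵀ.mulVec (fun _ => 1) = (fun _ => 1) ∧
     specRad (W - Jmat n) < 1) := by
  have hn0 : (n : ℝ) ≠ 0 := Nat.cast_ne_zero.mpr (by omega)
  constructor
  · intro h
    -- entrywise convergence of W^t to 1/n
    have hWt : ∀ i j : Fin n, Tendsto (fun t : ℕ => (W ^ t) i j) atTop (𝓝 (1 / n)) := by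
      intro i j
      have h1 := h (Pi.single j 1)
      rw [tendsto_pi_nhds] at h1
      have h2 := h1 i
      simp only [Matrix.mulVec_single_one, Matrix.col_apply, Matrix.transpose_apply, mul_one, Finset.sum_pi_single', Finset.mem_univ,
        if_true] at h2
      exact h2
    have j0 : Fin n := ⟨0, hn⟩
    -- row sums are 1
    have hW1 : W.mulVec (fun _ => 1) = (fun _ => 1) := by
      funext i
      have lA : Tendsto (fun t : ℕ => (W ^ (t + 1)) i j0) atTop (𝓝 (1 / n)) :=
        (hWt i j0).comp (tendsto_add_atTop_nat 1)
      have lB : Tendsto (fun t : ℕ => (W ^ (t + 1)) i j0) atTop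
          (𝓝 ((∑ k, W i k) * (1 / n))) := by
        have : ∀ t : ℕ, (W ^ (t + 1)) i j0 = ∑ k, W i k * (W ^ t) k j0 := by
          intro t; rw [pow_succ']; rfl
        simp only [this, Finset.sum_mul]
        exact tendsto_finset_sum _ fun k _ => (hWt k j0).const_mul (W i k)
      have heq : (∑ k, W i k) * (1 / n) = 1 / n := tendsto_nhds_unique lB lA
      have : (∑ k, W i k) = 1 := by
        field_simp at heq
        exact heq
      simp only [Matrix.mulVec, dotProduct, mul_one]
      exact this
    have hWT1 : Wᵀ.mulVec (fun _ => 1) = (fun _ => 1) := by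
      funext j
      have lA : Tendsto (fun t : ℕ => (W ^ (t + 1)) j0 j) atTop (𝓝 (1 / n)) :=
        (hWt j0 j).comp (tendsto_add_atTop_nat 1)
      have lB : Tendsto (fun t : ℕ => (W ^ (t + 1)) j0 j) atTop
          (𝓝 ((∑ k, W k j) * (1 / n))) := by
        have he : ∀ t : ℕ, (W ^ (t + 1)) j0 j = ∑ k, (W ^ t) j0 k * W k j := by
          intro t; rw [pow_succ]; rfl
        simp only [he]
        have e : ((∑ k, W k j) * (1 / n)) = ∑ k, 1 / (n:ℝ) * W k j := by
          rw [Finset.sum_mul]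
          exact Finset.sum_congr rfl fun k _ => by ring
        rw [e]
        exact tendsto_finset_sum _ fun k _ => (hWt j0 k).mul_const (W k j)
      have heq : (∑ k, W k j) * (1 / n) = 1 / n := tendsto_nhds_unique lB lA
      have : (∑ k, W k j) = 1 := by
        field_simp at heq
        exact heq
      simp only [Matrix.mulVec, dotProduct, mul_one, Matrix.transpose_apply]
      exact this
    refine ⟨hW1, hWT1, ?_⟩
    -- spectral radius
    have hWJ := AvgConsensus.WJ_eq hW1
    have hJW := AvgConsensus.JW_eq hWT1
    have hA : ∀ i j : Fin n, Tendsto (fun t : ℕ => ((W - Jmat n) ^ t) i j) atTop (𝓝 0) := by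
      intro i j
      have l1 : Tendsto (fun t : ℕ => (W ^ t) i j - 1 / n) atTop (𝓝 0) := by
        have := (hWt i j).sub_const (1 / n)
        rwa [sub_self] at this
      refine l1.congr' ?_
      filter_upwards [Filter.eventually_ge_atTop 1] with t ht
      rw [AvgConsensus.sub_pow_eq hn hWJ hJW ht]
      simp [Matrix.sub_apply, Jmat]
    have hAC : ∀ i j : Fin n,
        Tendsto (fun t : ℕ => (((W - Jmat n).map Complex.ofReal) ^ t) i j) atTop (𝓝 0) := by
      intro i j
      have : ∀ t : ℕ, (((W - Jmat n).map Complex.ofReal) ^ t) i j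
          = Complex.ofReal (((W - Jmat n) ^ t) i j) := by
        intro t; rw [AvgConsensus.map_pow_ofReal]; rfl
      simp only [this]
      have := (Complex.continuous_ofReal.tendsto 0).comp (hA i j)
      simpa [Function.comp_def] using this
    -- sSup of the (finite) set of abs of eigenvalues
    set S : Set ℝ := {r : ℝ | ∃ μ : ℂ,
      μ ∈ spectrum ℂ ((W - Jmat n).map Complex.ofReal) ∧ r = ‖μ‖} with hS
    have hSfin : S.Finite := by
      have : S = (‖·‖) '' (spectrum ℂ ((W - Jmat n).map Complex.ofReal)) := by
        ext r
        constructor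
        · rintro ⟨μ, hμ, rfl⟩; exact ⟨μ, hμ, rfl⟩
        · rintro ⟨μ, hμ, rfl⟩; exact ⟨μ, hμ, rfl⟩
      rw [this]
      exact (Matrix.finite_spectrum _).image _
    rw [specRad]
    rcases Set.eq_empty_or_nonempty S with hSe | hSne
    · rw [← hS, hSe, Real.sSup_empty]
      exact one_pos
    · have hmem := hSne.csSup_mem hSfin
      rw [← hS]
      obtain ⟨μ, hμ, heq⟩ := hmem
      rw [heq]
      exact AvgConsensus.abs_lt_one_of_pow_tendsto hAC hμ
  · rintro ⟨h1, h2, h3⟩ x0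
    have hWJ := AvgConsensus.WJ_eq h1
    have hJW := AvgConsensus.JW_eq h2
    have hA := AvgConsensus.pow_entry_tendsto_zero hn (W - Jmat n) h3
    rw [tendsto_pi_nhds]
    intro i
    have l1 : Tendsto (fun t : ℕ => (∑ k, x0 k) / n + (((W - Jmat n) ^ t).mulVec x0) i)
        atTop (𝓝 ((∑ k, x0 k) / n)) := by
      have l0 : Tendsto (fun t : ℕ => (((W - Jmat n) ^ t).mulVec x0) i) atTop (𝓝 0) := by
        have : ∀ t : ℕ, (((W - Jmat n) ^ t).mulVec x0) i
            = ∑ k, ((W - Jmat n) ^ t) i k * x0 k := fun t => rfl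
        simp only [this]
        have h0 : (0 : ℝ) = ∑ k : Fin n, 0 * x0 k := by simp
        rw [h0]
        exact tendsto_finset_sum _ fun k _ => (hA i k).mul_const (x0 k)
      have := l0.const_add ((∑ k, x0 k) / n)
      simpa using this
    refine l1.congr' ?_
    filter_upwards [Filter.eventually_ge_atTop 1] with t ht
    have hWt : W ^ t = Jmat n + (W - Jmat n) ^ t := by
      rw [AvgConsensus.sub_pow_eq hn hWJ hJW ht]
      abel
    rw [hWt, Matrix.add_mulVec]
    have := congrFun (AvgConsensus.Jmat_mulVec hn x0) i
    simp only [Pi.add_apply, this]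
end

section
/- Let n ≥ 2 and let G = (V,E) be an undirected connected graph on V = {1,…,n} with (i,i) ∈ E for every i. Let S = {W ∈ ℝ^{n×n} : W1 = 1, Wᵀ1 = 1, and W_{ij} = 0 for all (i,j) ∉ E}. If W* ∈ S minimizes the induced 2-norm ‖W − (1/n)11ᵀ‖ over S, then ‖W* − (1/n)11ᵀ‖ < 1, and hence ρ(W* − (1/n)11ᵀ) < 1, so W* satisfies the average consensus condition W*1 = 1, (W*)ᵀ1 = 1, ρ(W* − (1/n)11ᵀ) < 1. -/
open Matrix Filter

lemma ind2norm_le_of_sq {n : ℕ} (A : Matrix (Fin n) (Fin n) ℝ) {c : ℝ} (hc : 0 ≤ c)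
    (h : ∀ x : Fin n → ℝ, ∑ i, (A.mulVec x i)^2 ≤ c^2 * ∑ i, (x i)^2) :
    ind2norm A ≤ c := by
  refine ContinuousLinearMap.opNorm_le_bound _ hc fun x => ?_
  have hx : x = (WithLp.equiv 2 (Fin n → ℝ)).symm (WithLp.equiv 2 (Fin n → ℝ) x) :=
    (Equiv.symm_apply_apply _ _).symm
  set v : Fin n → ℝ := WithLp.equiv 2 (Fin n → ℝ) x with hv
  rw [hx, WithLp.equiv_symm_apply, Matrix.toEuclideanCLM_toLp]
  rw [EuclideanSpace.norm_eq, EuclideanSpace.norm_eq]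
  simp only [PiLp.toLp_apply, Real.norm_eq_abs, sq_abs]
  calc Real.sqrt (∑ i, (A.mulVec v i)^2) ≤ Real.sqrt (c^2 * ∑ i, (v i)^2) :=
        Real.sqrt_le_sqrt (h v)
    _ = c * Real.sqrt (∑ i, (v i)^2) := by
        rw [Real.sqrt_mul (sq_nonneg c), Real.sqrt_sq hc]

lemma sq_sum_mulVec_le {n : ℕ} (A : Matrix (Fin n) (Fin n) ℝ) (x : Fin n → ℝ) :
    ∑ i, (A.mulVec x i)^2 ≤ (ind2norm A)^2 * ∑ i, (x i)^2 := by
  have h := (Matrix.toEuclideanCLM (𝕜 := ℝ) A).le_opNorm ((WithLp.equiv 2 (Fin n → ℝ)).symm x)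
  rw [WithLp.equiv_symm_apply, Matrix.toEuclideanCLM_toLp,
    EuclideanSpace.norm_eq, EuclideanSpace.norm_eq] at h
  simp only [PiLp.toLp_apply, Real.norm_eq_abs, sq_abs] at h
  have h1 : 0 ≤ ∑ i, (A.mulVec x i)^2 := Finset.sum_nonneg fun i _ => sq_nonneg _
  have h2 : 0 ≤ ∑ i, (x i)^2 := Finset.sum_nonneg fun i _ => sq_nonneg _
  calc ∑ i, (A.mulVec x i)^2 = (Real.sqrt (∑ i, (A.mulVec x i)^2))^2 := (Real.sq_sqrt h1).symm
    _ ≤ (‖Matrix.toEuclideanCLM (𝕜 := ℝ) A‖ * Real.sqrt (∑ i, (x i)^2))^2 := by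
        apply pow_le_pow_left₀ (Real.sqrt_nonneg _) h
    _ = (ind2norm A)^2 * ∑ i, (x i)^2 := by
        rw [mul_pow, Real.sq_sqrt h2]; rfl

lemma specRad_le_ind2norm {n : ℕ} (A : Matrix (Fin n) (Fin n) ℝ) :
    specRad A ≤ ind2norm A := by
  have hN : (0:ℝ) ≤ ind2norm A := norm_nonneg _
  refine Real.sSup_le ?_ hN
  rintro r ⟨μ, hμ, rfl⟩
  have h1 : μ ∈ spectrum ℂ (Matrix.toLinAlgEquiv' (A.map Complex.ofReal)) := by
    rwa [AlgEquiv.spectrum_eq]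
  have h2 : Module.End.HasEigenvalue (Matrix.toLinAlgEquiv' (A.map Complex.ofReal)) μ :=
    Module.End.hasEigenvalue_iff_mem_spectrum.mpr h1
  obtain ⟨v, hv⟩ := h2.exists_hasEigenvector
  have hMv : (A.map Complex.ofReal).mulVec v = μ • v := by
    have := hv.apply_eq_smul
    rwa [Matrix.toLinAlgEquiv'_apply] at this
  set a : Fin n → ℝ := fun i => (v i).re with ha
  set b : Fin n → ℝ := fun i => (v i).im with hb
  have hva : ∀ i, A.mulVec a i = (μ * v i).re := by
    intro i
    have hh : ((A.map Complex.ofReal).mulVec v) i = μ * v i := by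
      rw [hMv]; simp
    calc A.mulVec a i = ∑ j, A i j * (v j).re := rfl
      _ = (∑ j, (A i j : ℂ) * v j).re := by
          rw [Complex.re_sum]
          exact Finset.sum_congr rfl fun j _ => by simp [Complex.mul_re]
      _ = (μ * v i).re := by rw [← hh]; rfl
  have hvb : ∀ i, A.mulVec b i = (μ * v i).im := by
    intro i
    have hh : ((A.map Complex.ofReal).mulVec v) i = μ * v i := by
      rw [hMv]; simp
    calc A.mulVec b i = ∑ j, A i j * (v j).im := rfl
      _ = (∑ j, (A i j : ℂ) * v j).im := by
          rw [Complex.im_sum]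
          exact Finset.sum_congr rfl fun j _ => by simp [Complex.mul_im]
      _ = (μ * v i).im := by rw [← hh]; rfl
  set T : ℝ := ∑ i, ((a i)^2 + (b i)^2) with hT
  have hTpos : 0 < T := by
    obtain ⟨i, hi⟩ := Function.ne_iff.mp hv.2
    have h1 : 0 < (a i)^2 + (b i)^2 := by
      have := Complex.normSq_pos.mpr hi
      rw [Complex.normSq_apply] at this
      nlinarith [this]
    refine lt_of_lt_of_le h1 ?_
    exact Finset.single_le_sum (f := fun j => (a j)^2 + (b j)^2)
      (fun j _ => by positivity) (Finset.mem_univ i)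
  have hsum : ∑ i, (A.mulVec a i)^2 + ∑ i, (A.mulVec b i)^2 = (‖μ‖)^2 * T := by
    rw [← Finset.sum_add_distrib, hT, Finset.mul_sum]
    refine Finset.sum_congr rfl fun i _ => ?_
    rw [hva i, hvb i]
    have h1 : (μ * v i).re^2 + (μ * v i).im^2 = Complex.normSq (μ * v i) := by
      rw [Complex.normSq_apply]; ring
    have h2 : Complex.normSq (μ * v i) = Complex.normSq μ * Complex.normSq (v i) :=
      map_mul _ _ _
    have h3 : (‖μ‖)^2 = Complex.normSq μ := Complex.sq_norm μ
    have h4 : (a i)^2 + (b i)^2 = Complex.normSq (v i) := by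
      rw [Complex.normSq_apply, ha, hb]; ring
    rw [h1, h2, ← h3, ← h4]
  have hle : (‖μ‖)^2 * T ≤ (ind2norm A)^2 * T := by
    rw [← hsum]
    have h5 : (ind2norm A)^2 * T =
        (ind2norm A)^2 * ∑ i, (a i)^2 + (ind2norm A)^2 * ∑ i, (b i)^2 := by
      rw [hT, ← mul_add, Finset.sum_add_distrib]
    rw [h5]
    exact add_le_add (sq_sum_mulVec_le A a) (sq_sum_mulVec_le A b)
  have hsq : (‖μ‖)^2 ≤ (ind2norm A)^2 := le_of_mul_le_mul_right hle hTpos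
  calc ‖μ‖ = Real.sqrt ((‖μ‖)^2) := (Real.sqrt_sq (norm_nonneg μ)).symm
    _ ≤ Real.sqrt ((ind2norm A)^2) := Real.sqrt_le_sqrt hsq
    _ = ind2norm A := Real.sqrt_sq hN

set_option maxHeartbeats 2000000 in
theorem optimal_weight_satisfies_consensus_condition
    (n : ℕ) (hn : 2 ≤ n) (E : Fin n → Fin n → Prop)
    (hsymm : ∀ i j, E i j → E j i)
    (hrefl : ∀ i, E i i)
    (hconn : ∀ i j, Relation.ReflTransGen E i j)
    (S : Set (Matrix (Fin n) (Fin n) ℝ))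
    (hS : S = {W | W.mulVec (fun _ => 1) = (fun _ => 1) ∧
                   Wᵀ.mulVec (fun _ => 1) = (fun _ => 1) ∧
                   ∀ i j, ¬ E i j → W i j = 0})
    (Wstar : Matrix (Fin n) (Fin n) ℝ)
    (hmem : Wstar ∈ S)
    (hmin : ∀ W ∈ S, ind2norm (Wstar - Jmat n) ≤ ind2norm (W - Jmat n)) :
    ind2norm (Wstar - Jmat n) < 1 ∧
    specRad (Wstar - Jmat n) < 1 ∧
    Wstar.mulVec (fun _ => 1) = (fun _ => 1) ∧
    Wstarᵀ.mulVec (fun _ => 1) = (fun _ => 1) := by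
  classical
  have hn0 : (0:ℝ) < n := by positivity
  have hnne : (n:ℝ) ≠ 0 := ne_of_gt hn0
  -- the simple graph
  set G : SimpleGraph (Fin n) :=
    { Adj := fun i j => E i j ∧ i ≠ j
      symm := ⟨fun i j h => ⟨hsymm i j h.1, h.2.symm⟩⟩
      loopless := ⟨fun i h => h.2 rfl⟩ } with hG
  letI : DecidableRel G.Adj := fun a b => Classical.dec _
  set L : Matrix (Fin n) (Fin n) ℝ := G.lapMatrix ℝ with hL
  have hreach : ∀ i j : Fin n, G.Reachable i j := by
    intro i j
    induction hconn i j with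
    | refl => exact SimpleGraph.Reachable.refl i
    | @tail b c _ hbc ih =>
        rcases eq_or_ne b c with h | h
        · exact h ▸ ih
        · exact ih.trans (SimpleGraph.Adj.reachable ⟨hbc, h⟩)
  -- quadratic form
  set q : (Fin n → ℝ) → ℝ := fun x => ∑ i, x i * L.mulVec x i with hq
  have hq0 : ∀ x, 0 ≤ q x := by
    intro x
    have := (SimpleGraph.posSemidef_lapMatrix ℝ G).dotProduct_mulVec_nonneg x
    simpa [dotProduct, hq] using this
  have hker : ∀ x : Fin n → ℝ, q x = 0 → (∑ i, x i) = 0 → x = 0 := by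
    intro x hqx hsx
    have hform : Matrix.toLinearMap₂' ℝ (G.lapMatrix ℝ) x x = 0 := by
      rw [Matrix.toLinearMap₂'_apply']
      simpa [dotProduct, hq] using hqx
    have hcst := (SimpleGraph.lapMatrix_toLinearMap₂'_apply'_eq_zero_iff_forall_reachable
      G x).mp hform
    have i0 : Fin n := ⟨0, by omega⟩
    have hxc : ∀ i, x i = x i0 := fun i => hcst i i0 (hreach i i0)
    have : ∑ i, x i = n * x i0 := by
      rw [Finset.sum_congr rfl fun i _ => hxc i]
      simp [Finset.sum_const, mul_comm]
    rw [this] at hsx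
    have hx0 : x i0 = 0 := by
      rcases mul_eq_zero.mp hsx with h | h
      · exact absurd h hnne
      · exact h
    funext i
    rw [hxc i, hx0]; rfl
  -- compact set
  set K : Set (Fin n → ℝ) := {x | ∑ i, x i ^ 2 = 1 ∧ ∑ i, x i = 0} with hK
  have hKc : IsCompact K := by
    apply Metric.isCompact_of_isClosed_isBounded
    · apply IsClosed.inter
      · exact isClosed_eq (continuous_finset_sum _ fun i _ => (continuous_apply i).pow 2)
          continuous_const
      · exact isClosed_eq (continuous_finset_sum _ fun i _ => continuous_apply i)
          continuous_const
    · rw [Metric.isBounded_iff_subset_closedBall 0]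
      refine ⟨1, fun x hx => ?_⟩
      rw [Metric.mem_closedBall, dist_zero_right]
      rw [pi_norm_le_iff_of_nonneg zero_le_one]
      intro i
      rw [Real.norm_eq_abs, ← sq_le_one_iff_abs_le_one]
      calc x i ^ 2 ≤ ∑ j, x j ^ 2 :=
            Finset.single_le_sum (f := fun j => x j ^ 2) (fun j _ => sq_nonneg _)
              (Finset.mem_univ i)
        _ = 1 := hx.1
  have hKne : K.Nonempty := by
    set i0 : Fin n := ⟨0, by omega⟩ with hi0
    set i1 : Fin n := ⟨1, by omega⟩ with hi1
    have hne : i0 ≠ i1 := by simp [hi0, hi1, Fin.ext_iff]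
    have hsum2 : ∀ f : Fin n → ℝ, (∀ c, c ≠ i0 → c ≠ i1 → f c = 0) →
        ∑ i, f i = f i0 + f i1 := by
      intro f hf
      rw [← Finset.sum_pair hne]
      symm
      refine Finset.sum_subset (Finset.subset_univ _) fun c _ hc => ?_
      simp only [Finset.mem_insert, Finset.mem_singleton] at hc
      push_neg at hc
      exact hf c hc.1 hc.2
    set aa : ℝ := Real.sqrt (1/2) with haa
    set f : Fin n → ℝ := fun i => if i = i0 then aa else if i = i1 then -aa else 0 with hf
    have hfi0 : f i0 = aa := by simp [hf]
    have hfi1 : f i1 = -aa := by simp [hf, Ne.symm hne]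
    refine ⟨f, ?_, ?_⟩
    · have h2 : ∑ i, f i ^ 2 = f i0 ^ 2 + f i1 ^ 2 :=
        hsum2 _ (fun c hc0 hc1 => by simp [hf, hc0, hc1])
      rw [h2, hfi0, hfi1, neg_sq, haa, Real.sq_sqrt (by norm_num : (0:ℝ) ≤ 1/2)]
      norm_num
    · have h3 : ∑ i, f i = f i0 + f i1 :=
        hsum2 _ (fun c hc0 hc1 => by simp [hf, hc0, hc1])
      rw [h3, hfi0, hfi1]
      ring
  have hqc : Continuous q := by
    have : q = fun x => ∑ i, x i * ∑ j, L i j * x j := rfl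
    rw [this]
    apply continuous_finset_sum
    intro i _
    exact (continuous_apply i).mul
      (continuous_finset_sum _ fun j _ => continuous_const.mul (continuous_apply j))
  obtain ⟨y₀, hy₀K, hy₀min'⟩ := hKc.exists_isMinOn hKne hqc.continuousOn
  have hy₀min : ∀ x ∈ K, q y₀ ≤ q x := fun x hx => hy₀min' hx
  set m : ℝ := q y₀ with hm
  have hmpos : 0 < m := by
    rcases lt_or_eq_of_le (hq0 y₀) with h | h
    · exact h
    · exfalso
      have hy0 : y₀ = 0 := hker y₀ h.symm hy₀K.2
      have := hy₀K.1
      rw [hy0] at this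
      simp at this
  -- homogeneity bound
  have hmx : ∀ x : Fin n → ℝ, (∑ i, x i) = 0 → m * ∑ i, x i ^ 2 ≤ q x := by
    intro x hsx
    rcases eq_or_ne (∑ i, x i ^ 2) 0 with ht | ht
    · rw [ht, mul_zero]; exact hq0 x
    · have htpos : 0 < ∑ i, x i ^ 2 :=
        lt_of_le_of_ne (Finset.sum_nonneg fun i _ => sq_nonneg _) (Ne.symm ht)
      set t : ℝ := ∑ i, x i ^ 2 with hts
      set r : ℝ := Real.sqrt t with hr
      have hrpos : 0 < r := Real.sqrt_pos.mpr htpos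
      have hr2 : r^2 = t := Real.sq_sqrt htpos.le
      set x' : Fin n → ℝ := fun i => r⁻¹ * x i with hx'
      have hx'K : x' ∈ K := by
        constructor
        · have : ∑ i, (r⁻¹ * x i)^2 = r⁻¹^2 * ∑ i, x i ^ 2 := by
            rw [Finset.mul_sum]; exact Finset.sum_congr rfl fun i _ => by ring
          rw [hx']
          simp only []
          rw [this, ← hts, inv_pow, hr2, inv_mul_cancel₀ (ne_of_gt htpos)]
        · have : ∑ i, r⁻¹ * x i = r⁻¹ * ∑ i, x i := (Finset.mul_sum _ _ _).symm
          rw [hx', this, hsx, mul_zero]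
      have hqx' : q x' = r⁻¹^2 * q x := by
        rw [hq]
        simp only []
        have hmv : ∀ i, L.mulVec x' i = r⁻¹ * L.mulVec x i := by
          intro i
          simp only [Matrix.mulVec, dotProduct, hx']
          rw [Finset.mul_sum]
          exact Finset.sum_congr rfl fun j _ => by ring
        calc ∑ i, x' i * L.mulVec x' i = ∑ i, r⁻¹^2 * (x i * L.mulVec x i) := by
              refine Finset.sum_congr rfl fun i _ => ?_
              rw [hmv i, hx']; ring
          _ = r⁻¹^2 * ∑ i, x i * L.mulVec x i := (Finset.mul_sum _ _ _).symm
      have hmle : m ≤ q x' := hy₀min x' hx'K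
      rw [hqx'] at hmle
      have : m * t ≤ r⁻¹^2 * q x * t := mul_le_mul_of_nonneg_right hmle htpos.le
      calc m * ∑ i, x i ^ 2 = m * t := rfl
        _ ≤ r⁻¹^2 * q x * t := this
        _ = q x := by
            rw [inv_pow, hr2]
            field_simp
  -- crude bound on L
  set Λ : ℝ := (∑ i, ∑ j, L i j ^ 2) + 1 with hΛ
  have hΛpos : 0 < Λ := by
    have : 0 ≤ ∑ i, ∑ j, L i j ^ 2 :=
      Finset.sum_nonneg fun i _ => Finset.sum_nonneg fun j _ => sq_nonneg _
    linarith
  have hΛb : ∀ x : Fin n → ℝ, ∑ i, (L.mulVec x i)^2 ≤ Λ * ∑ i, x i ^ 2 := by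
    intro x
    have hx2 : 0 ≤ ∑ i, x i ^ 2 := Finset.sum_nonneg fun i _ => sq_nonneg _
    have step : ∀ i : Fin n, (L.mulVec x i)^2 ≤ (∑ j, L i j ^ 2) * ∑ j, x j ^ 2 := by
      intro i
      have := Finset.sum_mul_sq_le_sq_mul_sq Finset.univ (fun j => L i j) x
      simpa [Matrix.mulVec, dotProduct] using this
    calc ∑ i, (L.mulVec x i)^2 ≤ ∑ i, (∑ j, L i j ^ 2) * ∑ j, x j ^ 2 :=
          Finset.sum_le_sum fun i _ => step i
      _ = (∑ i, ∑ j, L i j ^ 2) * ∑ j, x j ^ 2 := (Finset.sum_mul _ _ _).symm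
      _ ≤ Λ * ∑ i, x i ^ 2 := by
          apply mul_le_mul_of_nonneg_right _ hx2
          rw [hΛ]; linarith
  have hmΛ : m^2 ≤ Λ := by
    have hz := hΛb y₀
    have hy1 : ∑ i, y₀ i ^ 2 = 1 := hy₀K.1
    have hcs := Finset.sum_mul_sq_le_sq_mul_sq Finset.univ y₀ (fun i => L.mulVec y₀ i)
    have : m^2 ≤ (∑ i, y₀ i ^ 2) * ∑ i, (L.mulVec y₀ i)^2 := by
      rw [hm, hq]; exact hcs
    rw [hy1, one_mul] at this
    rw [hy1, mul_one] at hz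
    linarith
  -- the weight matrix
  set α : ℝ := m / Λ with hα
  have hαpos : 0 < α := div_pos hmpos hΛpos
  set csq : ℝ := 1 - m^2 / Λ with hcsq
  have hcsq0 : 0 ≤ csq := by
    rw [hcsq]
    have : m^2 / Λ ≤ 1 := (div_le_one hΛpos).mpr hmΛ
    linarith
  have hcsq1 : csq < 1 := by
    rw [hcsq]
    have : 0 < m^2 / Λ := div_pos (by positivity) hΛpos
    linarith
  set W : Matrix (Fin n) (Fin n) ℝ := 1 - α • L with hW
  have hL1 : ∀ i, ∑ j, L i j = 0 := by
    intro i
    have := congrFun (SimpleGraph.lapMatrix_mulVec_const_eq_zero (R := ℝ) G) i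
    simpa [Matrix.mulVec, dotProduct] using this
  have hLsymm : Lᵀ = L := SimpleGraph.isSymm_lapMatrix ℝ G
  have hWrow : W.mulVec (fun _ => 1) = (fun _ => 1) := by
    rw [hW, Matrix.sub_mulVec, Matrix.one_mulVec, Matrix.smul_mulVec,
      SimpleGraph.lapMatrix_mulVec_const_eq_zero, smul_zero]
    funext i; simp
  have hWmem : W ∈ S := by
    rw [hS]
    refine ⟨hWrow, ?_, ?_⟩
    · have hWT : Wᵀ = W := by
        rw [hW, Matrix.transpose_sub, Matrix.transpose_one, Matrix.transpose_smul, hLsymm]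
      rw [hWT]; exact hWrow
    · intro i j hEij
      have hij : i ≠ j := fun h => hEij (h ▸ hrefl i)
      have hLij : L i j = 0 := by
        rw [hL]
        show (G.degMatrix ℝ - G.adjMatrix ℝ) i j = 0
        rw [Matrix.sub_apply]
        have h1 : G.degMatrix ℝ i j = 0 := Matrix.diagonal_apply_ne _ hij
        have h2 : G.adjMatrix ℝ i j = 0 := by
          rw [SimpleGraph.adjMatrix_apply, if_neg]
          exact fun h => hEij h.1
        rw [h1, h2, sub_zero]
      rw [hW, Matrix.sub_apply, Matrix.one_apply_ne hij, Matrix.smul_apply, hLij,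
        smul_zero, sub_zero]
  -- key quadratic bound
  have hbound : ∀ x : Fin n → ℝ, ∑ i, ((W - Jmat n).mulVec x i)^2 ≤ csq * ∑ i, x i ^ 2 := by
    intro x
    set s : ℝ := (∑ j, x j) / n with hs
    set y : Fin n → ℝ := fun i => x i - s with hy
    set z : Fin n → ℝ := L.mulVec y with hz
    have hsy : ∑ i, y i = 0 := by
      rw [hy]
      simp only []
      rw [Finset.sum_sub_distrib, Finset.sum_const, Finset.card_univ, Fintype.card_fin,
        nsmul_eq_mul, hs]
      field_simp
      ring
    have hzx : ∀ i, z i = L.mulVec x i := by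
      intro i
      rw [hz, hy]
      simp only [Matrix.mulVec, dotProduct]
      have : ∑ j, L i j * (x j - s) = ∑ j, L i j * x j - s * ∑ j, L i j := by
        rw [Finset.mul_sum, ← Finset.sum_sub_distrib]
        exact Finset.sum_congr rfl fun j _ => by ring
      rw [this, hL1 i, mul_zero, sub_zero]
    have happ : ∀ i, (W - Jmat n).mulVec x i = y i - α * z i := by
      intro i
      have hJ : (Jmat n).mulVec x i = s := by
        simp only [Jmat, Matrix.mulVec, dotProduct, Matrix.of_apply]
        rw [hs, Finset.sum_div]
        exact Finset.sum_congr rfl fun j _ => by ring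
      rw [Matrix.sub_mulVec]
      simp only [Pi.sub_apply]
      rw [hJ]
      have hWx : W.mulVec x i = x i - α * L.mulVec x i := by
        rw [hW, Matrix.sub_mulVec, Matrix.one_mulVec, Matrix.smul_mulVec]
        simp
      rw [hWx, hzx i, hy]
      ring
    have hqy : m * ∑ i, y i ^ 2 ≤ ∑ i, y i * z i := by
      have := hmx y hsy
      rw [hq] at this
      exact this
    have hzb : ∑ i, z i ^ 2 ≤ Λ * ∑ i, y i ^ 2 := by
      have := hΛb y
      simpa [hz] using this
    have hyx : ∑ i, y i ^ 2 ≤ ∑ i, x i ^ 2 := by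
      have hxe : ∀ i, x i = y i + s := fun i => by rw [hy]; ring
      have : ∑ i, x i ^ 2 = ∑ i, y i ^ 2 + 2 * s * ∑ i, y i + n * s^2 := by
        rw [(Finset.sum_congr rfl fun i _ => by rw [hxe i] : ∑ i, x i ^2 = ∑ i, (y i + s)^2)]
        rw [(Finset.sum_congr rfl fun i _ => by ring :
          ∑ i, (y i + s)^2 = ∑ i, (y i ^ 2 + 2 * s * y i + s^2))]
        rw [Finset.sum_add_distrib, Finset.sum_add_distrib, ← Finset.mul_sum,
          Finset.sum_const, Finset.card_univ, Fintype.card_fin, nsmul_eq_mul]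
      rw [this, hsy]
      nlinarith [sq_nonneg s, hn0]
    have hy2 : 0 ≤ ∑ i, y i ^ 2 := Finset.sum_nonneg fun i _ => sq_nonneg _
    have expand : ∑ i, ((W - Jmat n).mulVec x i)^2
        = ∑ i, y i ^ 2 - 2 * α * ∑ i, y i * z i + α^2 * ∑ i, z i ^ 2 := by
      rw [(Finset.sum_congr rfl fun i _ => by rw [happ i] :
        ∑ i, ((W - Jmat n).mulVec x i)^2 = ∑ i, (y i - α * z i)^2)]
      rw [(Finset.sum_congr rfl fun i _ => by ring :
        ∑ i, (y i - α * z i)^2 = ∑ i, (y i ^ 2 - 2 * α * (y i * z i) + α ^ 2 * z i ^ 2))]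
      rw [Finset.sum_add_distrib, Finset.sum_sub_distrib, ← Finset.mul_sum, ← Finset.mul_sum]
    calc ∑ i, ((W - Jmat n).mulVec x i)^2
        = ∑ i, y i ^ 2 - 2 * α * ∑ i, y i * z i + α^2 * ∑ i, z i ^ 2 := expand
      _ ≤ ∑ i, y i ^ 2 - 2 * α * (m * ∑ i, y i ^ 2) + α^2 * (Λ * ∑ i, y i ^ 2) := by
          have h1 : 2 * α * (m * ∑ i, y i ^ 2) ≤ 2 * α * ∑ i, y i * z i :=
            mul_le_mul_of_nonneg_left hqy (by positivity)
          have h2 : α^2 * ∑ i, z i ^ 2 ≤ α^2 * (Λ * ∑ i, y i ^ 2) :=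
            mul_le_mul_of_nonneg_left hzb (sq_nonneg _)
          linarith
      _ = csq * ∑ i, y i ^ 2 := by
          rw [hcsq, hα]
          field_simp
          ring
      _ ≤ csq * ∑ i, x i ^ 2 := mul_le_mul_of_nonneg_left hyx hcsq0
  have hWnorm : ind2norm (W - Jmat n) ≤ Real.sqrt csq := by
    apply ind2norm_le_of_sq _ (Real.sqrt_nonneg _)
    intro x
    rw [Real.sq_sqrt hcsq0]
    exact hbound x
  have hsqrt1 : Real.sqrt csq < 1 := by
    have := Real.sqrt_lt_sqrt hcsq0 hcsq1
    rwa [Real.sqrt_one] at this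
  have hfirst : ind2norm (Wstar - Jmat n) < 1 :=
    lt_of_le_of_lt (le_trans (hmin W hWmem) hWnorm) hsqrt1
  refine ⟨hfirst, lt_of_le_of_lt (specRad_le_ind2norm _) hfirst, ?_, ?_⟩
  · rw [hS] at hmem; exact hmem.1
  · rw [hS] at hmem; exact hmem.2.1
end

section
/- Let n ≥ 2 and let G = (V,E) be an undirected connected graph on V = {1,…,n} with (i,i) ∈ E for every i. Then there exists a matrix W ∈ ℝ^{n×n} satisfying W1 = 1, Wᵀ1 = 1, W_{ij} = 0 for all (i,j) ∉ E, and ‖W − (1/n)11ᵀ‖ < 1. -/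
open Matrix Filter

/-- Quadratic form of the graph Laplacian as a sum of squared edge differences. -/
lemma lap_quad {n : ℕ} (A : Matrix (Fin n) (Fin n) ℝ) (hA : ∀ i j, A i j = A j i)
    (y : Fin n → ℝ) :
    y ⬝ᵥ (Matrix.diagonal (fun i => ∑ j, A i j) - A).mulVec y
      = (1/2) * ∑ i, ∑ j, A i j * (y i - y j)^2 := by
  have hsw : ∑ i, ∑ j, A i j * (y j * y j) = ∑ i, ∑ j, A i j * (y i * y i) := by
    rw [Finset.sum_comm]
    exact Finset.sum_congr rfl fun j _ => Finset.sum_congr rfl fun i _ => by rw [hA]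
  have inner : ∀ i, (∑ j, ((Matrix.diagonal (fun i => ∑ j, A i j) - A) i j) * y j)
      = ((∑ k, A i k) * y i) - ∑ j, A i j * y j := by
    intro i
    have h1 : ∀ j, ((Matrix.diagonal (fun i => ∑ j, A i j) - A) i j) * y j
        = (if i = j then (∑ k, A i k) * y j else 0) - A i j * y j := by
      intro j; by_cases h : i = j <;> simp [Matrix.sub_apply, Matrix.diagonal_apply, h, sub_mul]
    rw [Finset.sum_congr rfl fun j _ => h1 j, Finset.sum_sub_distrib, Finset.sum_ite_eq,
      if_pos (Finset.mem_univ i)]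
  have step1 : y ⬝ᵥ (Matrix.diagonal (fun i => ∑ j, A i j) - A).mulVec y
      = (∑ i, ∑ j, A i j * (y i * y i)) - ∑ i, ∑ j, A i j * (y i * y j) := by
    simp only [dotProduct, Matrix.mulVec]
    rw [← Finset.sum_sub_distrib]
    refine Finset.sum_congr rfl fun i _ => ?_
    rw [inner i, mul_sub, Finset.sum_mul, Finset.mul_sum, Finset.mul_sum,
      ← Finset.sum_sub_distrib, ← Finset.sum_sub_distrib]
    exact Finset.sum_congr rfl fun j _ => by ring
  have step2 : ∑ i, ∑ j, A i j * (y i - y j)^2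
      = (∑ i, ∑ j, A i j * (y i * y i)) - 2 * (∑ i, ∑ j, A i j * (y i * y j))
        + ∑ i, ∑ j, A i j * (y j * y j) := by
    have h2 : ∀ i j, A i j * (y i - y j)^2
        = A i j * (y i * y i) - 2 * (A i j * (y i * y j)) + A i j * (y j * y j) := by
      intro i j; ring
    simp only [h2, Finset.sum_add_distrib, Finset.sum_sub_distrib, ← Finset.mul_sum]
  rw [step1, step2]
  linarith [hsw]

/-- Upper bound on the Laplacian quadratic form. -/
lemma quad_ub {n : ℕ} (A : Matrix (Fin n) (Fin n) ℝ) (hA : ∀ i j, A i j = A j i)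
    (h0 : ∀ i j, 0 ≤ A i j) (h1 : ∀ i j, A i j ≤ 1) (v : Fin n → ℝ) :
    v ⬝ᵥ (Matrix.diagonal (fun i => ∑ j, A i j) - A).mulVec v ≤ (2 * n) * (v ⬝ᵥ v) := by
  rw [lap_quad A hA v]
  have hvv : v ⬝ᵥ v = ∑ i, (v i)^2 := Finset.sum_congr rfl fun i _ => (sq (v i)).symm ▸ by ring
  have hb : ∀ i j : Fin n, A i j * (v i - v j)^2 ≤ 2 * (v i)^2 + 2 * (v j)^2 := by
    intro i j
    nlinarith [h0 i j, h1 i j, sq_nonneg (v i - v j), sq_nonneg (v i + v j)]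
  have hsum : ∑ i, ∑ j, A i j * (v i - v j)^2
      ≤ ∑ i : Fin n, ∑ j : Fin n, (2 * (v i)^2 + 2 * (v j)^2) :=
    Finset.sum_le_sum fun i _ => Finset.sum_le_sum fun j _ => hb i j
  have hval : ∑ i : Fin n, ∑ j : Fin n, (2 * (v i)^2 + 2 * (v j)^2)
      = 4 * n * ∑ i, (v i)^2 := by
    simp only [Finset.sum_add_distrib, Finset.sum_const, Finset.card_univ, Fintype.card_fin,
      nsmul_eq_mul, ← Finset.mul_sum, ← Finset.sum_mul]
    ring
  rw [hvv]
  nlinarith [hsum, hval]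

/-- Cauchy–Schwarz for a PSD quadratic form: `L² ≼ K·L` when `L ≼ K·I`. -/
lemma quad_cs {n : ℕ} (L : Matrix (Fin n) (Fin n) ℝ) (hsymL : Lᵀ = L)
    (hpos : ∀ v : Fin n → ℝ, 0 ≤ v ⬝ᵥ L.mulVec v) (K : ℝ) (hK0 : 0 ≤ K)
    (hK : ∀ v : Fin n → ℝ, v ⬝ᵥ L.mulVec v ≤ K * (v ⬝ᵥ v)) (y : Fin n → ℝ) :
    (L.mulVec y) ⬝ᵥ (L.mulVec y) ≤ K * (y ⬝ᵥ L.mulVec y) := by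
  set u := L.mulVec y with hu
  have hyLu : y ⬝ᵥ L.mulVec u = u ⬝ᵥ u := by
    rw [Matrix.dotProduct_mulVec, ← Matrix.mulVec_transpose, hsymL]
  have hq : ∀ t : ℝ, 0 ≤ (u ⬝ᵥ L.mulVec u) * (t * t) + (2 * (u ⬝ᵥ u)) * t + y ⬝ᵥ L.mulVec y := by
    intro t
    have h := hpos (y + t • u)
    simp only [Matrix.mulVec_add, Matrix.mulVec_smul, add_dotProduct,
      dotProduct_add, smul_dotProduct, dotProduct_smul,
      smul_eq_mul, ← hu, hyLu] at h
    nlinarith [h]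
  have hd := discrim_le_zero hq
  rw [discrim] at hd
  have h1 : 0 ≤ u ⬝ᵥ u := Finset.sum_nonneg fun i _ => mul_self_nonneg (u i)
  have h2 : 0 ≤ y ⬝ᵥ L.mulVec y := hpos y
  have h3 : u ⬝ᵥ L.mulVec u ≤ K * (u ⬝ᵥ u) := hK u
  have h4 : 0 ≤ u ⬝ᵥ L.mulVec u := hpos u
  rcases eq_or_lt_of_le h1 with h5 | h5
  · nlinarith
  · nlinarith

/-- Spectral gap: a PSD form vanishing only at 0 on the mean-zero hyperplane is
bounded below there. -/
lemma gap {n : ℕ} (L : Matrix (Fin n) (Fin n) ℝ)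
    (hex : ∃ x : Fin n → ℝ, (∑ i, x i) = 0 ∧ ∑ i, (x i)^2 = 1)
    (hker : ∀ y : Fin n → ℝ, (∑ i, y i) = 0 → y ⬝ᵥ L.mulVec y = 0 → y = 0)
    (hpos : ∀ y : Fin n → ℝ, 0 ≤ y ⬝ᵥ L.mulVec y) :
    ∃ lam : ℝ, 0 < lam ∧
      ∀ y : Fin n → ℝ, (∑ i, y i) = 0 → lam * (y ⬝ᵥ y) ≤ y ⬝ᵥ L.mulVec y := by
  classical
  set S : Set (EuclideanSpace ℝ (Fin n)) := {x | (∑ i, x i) = 0 ∧ ∑ i, (x i)^2 = 1} with hS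
  set f : EuclideanSpace ℝ (Fin n) → ℝ := fun x => ∑ i, x i * ∑ j, L i j * x j with hf
  have hfeq : ∀ y : Fin n → ℝ, f ((WithLp.equiv 2 (Fin n → ℝ)).symm y) = y ⬝ᵥ L.mulVec y := by
    intro y; simp [hf, dotProduct, Matrix.mulVec]
  have hcont : Continuous f := by
    refine continuous_finset_sum _ fun i _ => ?_
    exact ((PiLp.continuous_apply 2 _ i).mul
      (continuous_finset_sum _ fun j _ => continuous_const.mul (PiLp.continuous_apply 2 _ j)))
  have hclosed : IsClosed S := by
    refine IsClosed.inter ?_ ?_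
    · exact isClosed_eq (continuous_finset_sum _ fun i _ => PiLp.continuous_apply 2 _ i) continuous_const
    · exact isClosed_eq (continuous_finset_sum _ fun i _ => (PiLp.continuous_apply 2 _ i).pow 2)
        continuous_const
  have hsub : S ⊆ Metric.closedBall 0 1 := by
    intro x hx
    rw [Metric.mem_closedBall, dist_zero_right]
    have : ‖x‖ = Real.sqrt (∑ i, (x i)^2) := by
      rw [EuclideanSpace.norm_eq]
      congr 1
      exact Finset.sum_congr rfl fun i _ => by rw [Real.norm_eq_abs, sq_abs]
    rw [this, hx.2, Real.sqrt_one]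
  have hcomp : IsCompact S :=
    (isCompact_closedBall (0 : EuclideanSpace ℝ (Fin n)) 1).of_isClosed_subset hclosed hsub
  obtain ⟨x, hx1, hx2⟩ := hex
  have hne : S.Nonempty := ⟨(WithLp.equiv 2 (Fin n → ℝ)).symm x, hx1, hx2⟩
  obtain ⟨x₀, hx₀S, hmin⟩ := hcomp.exists_isMinOn hne hcont.continuousOn
  set lam := f x₀ with hlam
  have hx₀eq : f x₀ = (fun i => x₀ i) ⬝ᵥ L.mulVec (fun i => x₀ i) := by
    simp [hf, dotProduct, Matrix.mulVec]
  have hlampos : 0 < lam := by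
    rcases lt_or_eq_of_le (hpos (fun i => x₀ i)) with h | h
    · rw [hlam, hx₀eq]; exact h
    · exfalso
      have h0 : (fun i => x₀ i) = 0 := hker _ hx₀S.1 h.symm
      have hzz : ∀ i, x₀ i = 0 := fun i => congrFun h0 i
      have hcontr : ∑ i, (x₀ i)^2 = 0 := by simp [hzz]
      have h2' : ∑ i, (x₀ i)^2 = 1 := hx₀S.2
      rw [h2'] at hcontr; norm_num at hcontr
  refine ⟨lam, hlampos, fun y hy => ?_⟩
  by_cases hy0 : y = 0
  · simp [hy0, dotProduct]
  · have hs : 0 < ∑ i, (y i)^2 := by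
      rcases (Finset.sum_nonneg (fun i (_ : i ∈ Finset.univ) => sq_nonneg (y i))).lt_or_eq
        with h | h
      · exact h
      · exfalso
        apply hy0
        funext i
        have := (Finset.sum_eq_zero_iff_of_nonneg
          (fun i (_ : i ∈ Finset.univ) => sq_nonneg (y i))).mp h.symm i (Finset.mem_univ i)
        exact pow_eq_zero_iff (two_ne_zero) |>.mp this
    set s := ∑ i, (y i)^2 with hsdef
    set z : Fin n → ℝ := (Real.sqrt s)⁻¹ • y with hz
    have hsqrt : Real.sqrt s > 0 := Real.sqrt_pos.mpr hs
    have hzS : ((WithLp.equiv 2 (Fin n → ℝ)).symm z) ∈ S := by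
      constructor
      · show ∑ i, z i = 0
        simp [hz, ← Finset.mul_sum, hy]
      · show ∑ i, (z i)^2 = 1
        have : ∀ i, (z i)^2 = ((Real.sqrt s)⁻¹)^2 * (y i)^2 := fun i => by
          simp [hz]; ring
        rw [Finset.sum_congr rfl fun i _ => this i, ← Finset.mul_sum, ← hsdef,
          inv_pow, Real.sq_sqrt hs.le]
        field_simp
    have hle := isMinOn_iff.mp hmin _ hzS
    rw [hfeq] at hle
    have hquad : z ⬝ᵥ L.mulVec z = ((Real.sqrt s)⁻¹)^2 * (y ⬝ᵥ L.mulVec y) := by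
      simp [hz, smul_dotProduct, dotProduct_smul, Matrix.mulVec_smul]
      ring
    rw [hquad, inv_pow, Real.sq_sqrt hs.le] at hle
    have hyy : y ⬝ᵥ y = s := Finset.sum_congr rfl fun i _ => by rw [sq]
    rw [hyy]
    have := mul_le_mul_of_nonneg_right hle hs.le
    calc lam * s ≤ s⁻¹ * (y ⬝ᵥ L.mulVec y) * s := this
      _ = y ⬝ᵥ L.mulVec y := by field_simp

set_option maxHeartbeats 1000000 in
theorem exists_weight_matrix_with_contractive_factor
    (n : ℕ) (hn : 2 ≤ n) (E : Fin n → Fin n → Prop)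
    (hsymm : ∀ i j, E i j → E j i)
    (hrefl : ∀ i, E i i)
    (hconn : ∀ i j, Relation.ReflTransGen E i j) :
    ∃ W : Matrix (Fin n) (Fin n) ℝ,
      W.mulVec (fun _ => 1) = (fun _ => 1) ∧
      Wᵀ.mulVec (fun _ => 1) = (fun _ => 1) ∧
      (∀ i j, ¬ E i j → W i j = 0) ∧
      ind2norm (W - Jmat n) < 1 := by
  classical
  have hn0 : 0 < n := by omega
  have hnR : (0 : ℝ) < n := by exact_mod_cast hn0
  set A : Matrix (Fin n) (Fin n) ℝ :=
    Matrix.of (fun i j => if E i j ∧ i ≠ j then (1 : ℝ) else 0) with hAdef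
  have hAsym : ∀ i j, A i j = A j i := by
    intro i j
    by_cases h : E i j ∧ i ≠ j
    · simp [hAdef, h, hsymm i j h.1, h.2.symm]
    · have h' : ¬ (E j i ∧ j ≠ i) := by
        rintro ⟨he, hne⟩; exact h ⟨hsymm j i he, hne.symm⟩
      simp [hAdef, h, h']
  have hA0 : ∀ i j, 0 ≤ A i j := by
    intro i j; by_cases h : E i j ∧ i ≠ j <;> simp [hAdef, h]
  have hA1 : ∀ i j, A i j ≤ 1 := by
    intro i j; by_cases h : E i j ∧ i ≠ j <;> simp [hAdef, h]
  set L : Matrix (Fin n) (Fin n) ℝ := Matrix.diagonal (fun i => ∑ j, A i j) - A with hLdef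
  have hLsym : Lᵀ = L := by
    rw [hLdef, Matrix.transpose_sub, Matrix.diagonal_transpose]
    congr 1
    ext i j
    exact hAsym j i
  have hpos : ∀ v : Fin n → ℝ, 0 ≤ v ⬝ᵥ L.mulVec v := by
    intro v
    rw [hLdef, lap_quad A hAsym v]
    have : (0:ℝ) ≤ ∑ i, ∑ j, A i j * (v i - v j)^2 :=
      Finset.sum_nonneg fun i _ => Finset.sum_nonneg fun j _ =>
        mul_nonneg (hA0 i j) (sq_nonneg _)
    linarith
  have hub : ∀ v : Fin n → ℝ, v ⬝ᵥ L.mulVec v ≤ (2 * n) * (v ⬝ᵥ v) := by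
    intro v; rw [hLdef]; exact quad_ub A hAsym hA0 hA1 v
  have hker : ∀ y : Fin n → ℝ, (∑ i, y i) = 0 → y ⬝ᵥ L.mulVec y = 0 → y = 0 := by
    intro y hsum hq
    rw [hLdef, lap_quad A hAsym y] at hq
    have hzero : ∀ i j, A i j * (y i - y j)^2 = 0 := by
      have h2 : ∑ i, ∑ j, A i j * (y i - y j)^2 = 0 := by linarith
      have h3 := (Finset.sum_eq_zero_iff_of_nonneg
        (fun i (_ : i ∈ Finset.univ) => Finset.sum_nonneg fun j _ =>
          mul_nonneg (hA0 i j) (sq_nonneg (y i - y j)))).mp h2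
      intro i j
      exact (Finset.sum_eq_zero_iff_of_nonneg
        (fun j (_ : j ∈ Finset.univ) => mul_nonneg (hA0 i j) (sq_nonneg (y i - y j)))).mp
        (h3 i (Finset.mem_univ i)) j (Finset.mem_univ j)
    have hedge : ∀ i j, E i j → y i = y j := by
      intro i j he
      by_cases hij : i = j
      · rw [hij]
      · have hAij : A i j = 1 := by simp [hAdef, he, hij]
        have h4 := hzero i j
        rw [hAij, one_mul] at h4
        have h5 := pow_eq_zero_iff (two_ne_zero) |>.mp h4
        linarith [sub_eq_zero.mp h5]
    have hconst : ∀ i j, y i = y j := by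
      intro i j
      induction hconn i j with
      | refl => rfl
      | tail _ e ih => exact ih.trans (hedge _ _ e)
    set i0 : Fin n := ⟨0, hn0⟩
    have hyc : ∀ i, y i = y i0 := fun i => hconst i i0
    have hsum2 : ∑ i, y i = n * y i0 := by
      rw [Finset.sum_congr rfl fun i _ => hyc i]
      simp [Finset.sum_const, Finset.card_univ]
    rw [hsum2] at hsum
    have hy0 : y i0 = 0 := by
      rcases mul_eq_zero.mp hsum with h | h
      · exact absurd h (by positivity)
      · exact h
    funext i
    rw [hyc i, hy0]; rfl
  have hex : ∃ x : Fin n → ℝ, (∑ i, x i) = 0 ∧ ∑ i, (x i)^2 = 1 := by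
    set i0 : Fin n := ⟨0, by omega⟩
    set i1 : Fin n := ⟨1, by omega⟩
    have hne : i0 ≠ i1 := by simp [i0, i1, Fin.ext_iff]
    set c : ℝ := (Real.sqrt 2)⁻¹ with hcdef
    refine ⟨fun i => if i = i0 then c else if i = i1 then -c else 0, ?_, ?_⟩
    · rw [Finset.sum_eq_add_of_mem i0 i1 (Finset.mem_univ _) (Finset.mem_univ _) hne ?_]
      · simp [hne, hne.symm]
      · intro k _ hk
        simp [hk.1, hk.2]
    · rw [Finset.sum_eq_add_of_mem i0 i1 (Finset.mem_univ _) (Finset.mem_univ _) hne ?_]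
      · have h2 : c^2 = 1/2 := by
          rw [hcdef, inv_pow, Real.sq_sqrt (by norm_num : (0:ℝ) ≤ 2)]
          norm_num
        simp [hne, hne.symm]
        nlinarith [h2]
      · intro k _ hk
        simp [hk.1, hk.2]
  obtain ⟨lam, hlam, hgap⟩ := gap L hex hker hpos
  set lam' : ℝ := min lam 1 with hlam'def
  have hlam'pos : 0 < lam' := lt_min hlam one_pos
  have hlam'le1 : lam' ≤ 1 := min_le_right _ _
  have hgap' : ∀ y : Fin n → ℝ, (∑ i, y i) = 0 → lam' * (y ⬝ᵥ y) ≤ y ⬝ᵥ L.mulVec y := by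
    intro y hy
    calc lam' * (y ⬝ᵥ y) ≤ lam * (y ⬝ᵥ y) :=
          mul_le_mul_of_nonneg_right (min_le_left _ _)
            (Finset.sum_nonneg fun i _ => mul_self_nonneg (y i))
      _ ≤ y ⬝ᵥ L.mulVec y := hgap y hy
  set α : ℝ := 1 / (2 * n) with hαdef
  have hα : 0 < α := by positivity
  have hα2n : α * (2 * n) = 1 := by rw [hαdef]; field_simp
  have hα4 : α ≤ 1/4 := by
    rw [hαdef, div_le_div_iff₀ (by positivity) (by norm_num)]
    have : (2:ℝ) ≤ n := by exact_mod_cast hn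
    linarith
  set W : Matrix (Fin n) (Fin n) ℝ := 1 - α • L with hWdef
  have hWsym : Wᵀ = W := by
    rw [hWdef, Matrix.transpose_sub, Matrix.transpose_one, Matrix.transpose_smul, hLsym]
  have hL1 : L.mulVec (fun _ => 1) = 0 := by
    funext i
    simp [hLdef, Matrix.sub_mulVec, Matrix.mulVec, dotProduct,
      Matrix.diagonal_apply, Finset.sum_ite_eq]
  have hW1 : W.mulVec (fun _ => 1) = (fun _ => 1) := by
    rw [hWdef, Matrix.sub_mulVec, Matrix.smul_mulVec, hL1]
    funext i
    simp [Matrix.one_mulVec]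
  have hWT1 : Wᵀ.mulVec (fun _ => 1) = (fun _ => 1) := by rw [hWsym]; exact hW1
  have hWzero : ∀ i j, ¬ E i j → W i j = 0 := by
    intro i j hij
    have hne : i ≠ j := fun h => hij (h ▸ hrefl i)
    have hAij : A i j = 0 := by simp [hAdef, hij]
    have hLij : L i j = 0 := by
      simp [hLdef, Matrix.sub_apply, Matrix.diagonal_apply_ne _ hne, hAij]
    simp [hWdef, Matrix.sub_apply, Matrix.one_apply_ne hne, hLij]
  set M : Matrix (Fin n) (Fin n) ℝ := W - Jmat n with hMdef
  have hkey : ∀ x : Fin n → ℝ, (M.mulVec x) ⬝ᵥ (M.mulVec x) ≤ (1 - α * lam') * (x ⬝ᵥ x) := by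
    intro x
    set m : ℝ := (∑ i, x i) / n with hmdef
    set y : Fin n → ℝ := fun i => x i - m with hydef
    have hsx : ∑ i, x i = n * m := by rw [hmdef]; field_simp
    have hysum : ∑ i, y i = 0 := by
      simp only [hydef]
      rw [Finset.sum_sub_distrib, hsx, Finset.sum_const, Finset.card_univ, Fintype.card_fin,
        nsmul_eq_mul]
      ring
    have hLy : L.mulVec x = L.mulVec y := by
      have hxy : x = y + (fun _ => m) := by funext i; simp [hydef]
      rw [hxy, Matrix.mulVec_add]
      have hconst : L.mulVec (fun _ : Fin n => m) = 0 := by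
        have hsm : (fun _ : Fin n => m) = m • (fun _ : Fin n => (1:ℝ)) := by
          funext i; simp
        rw [hsm, Matrix.mulVec_smul, hL1, smul_zero]
      rw [hconst, add_zero]
    have hJx : (Jmat n).mulVec x = (fun _ => m) := by
      funext i
      simp only [Jmat, Matrix.mulVec, dotProduct, Matrix.of_apply]
      rw [← Finset.mul_sum, hmdef]
      ring
    have hMx : M.mulVec x = y - α • L.mulVec y := by
      rw [hMdef, Matrix.sub_mulVec, hWdef, Matrix.sub_mulVec, Matrix.smul_mulVec,
        Matrix.one_mulVec, hJx, hLy]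
      funext i
      simp [hydef]
      ring
    set u := L.mulVec y with hudef
    set t := y ⬝ᵥ u with htdef
    set q := y ⬝ᵥ y with hqdef
    have hq0 : 0 ≤ q := Finset.sum_nonneg fun i _ => mul_self_nonneg (y i)
    have ht0 : 0 ≤ t := hpos y
    have htq : lam' * q ≤ t := hgap' y hysum
    have huu : u ⬝ᵥ u ≤ (2*n) * t := quad_cs L hLsym hpos (2*n) (by positivity) hub y
    have hdot : (M.mulVec x) ⬝ᵥ (M.mulVec x) = q - 2*α*t + α^2 * (u ⬝ᵥ u) := by
      rw [hMx]
      have hcomm : u ⬝ᵥ y = y ⬝ᵥ u := dotProduct_comm u y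
      simp only [sub_dotProduct, dotProduct_sub, smul_dotProduct,
        dotProduct_smul, smul_eq_mul, hcomm, ← htdef, ← hqdef]
      ring
    have hqx : q ≤ x ⬝ᵥ x := by
      have hdiff : x ⬝ᵥ x - q = n * m^2 := by
        rw [hqdef]
        simp only [dotProduct, hydef]
        rw [← Finset.sum_sub_distrib]
        have he : ∀ i, x i * x i - (x i - m) * (x i - m) = 2*m*(x i) - m^2 := fun i => by ring
        rw [Finset.sum_congr rfl fun i _ => he i, Finset.sum_sub_distrib, ← Finset.mul_sum,
          hsx, Finset.sum_const, Finset.card_univ, Fintype.card_fin, nsmul_eq_mul]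
        ring
      nlinarith [sq_nonneg m, hnR]
    have h13 : α^2 * (u ⬝ᵥ u) ≤ α * t := by
      have h1 : α^2 * (u ⬝ᵥ u) ≤ α^2 * ((2*n)*t) :=
        mul_le_mul_of_nonneg_left huu (sq_nonneg α)
      have h3 : α^2 * ((2*n)*t) = α * t := by
        calc α^2 * ((2*n)*t) = (α * (2*n)) * (α * t) := by ring
          _ = 1 * (α * t) := by rw [hα2n]
          _ = α * t := one_mul _
      linarith
    have hat : α * (lam' * q) ≤ α * t := mul_le_mul_of_nonneg_left htq hα.le
    have hfinal : q - 2*α*t + α^2 * (u ⬝ᵥ u) ≤ (1 - α * lam') * q := by nlinarith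
    have hlast : (1 - α * lam') * q ≤ (1 - α * lam') * (x ⬝ᵥ x) := by
      apply mul_le_mul_of_nonneg_left hqx
      nlinarith [hα4, hlam'le1, hlam'pos.le, hα.le]
    linarith [hdot.le, hfinal, hlast, hdot.ge]
  have hαlamnn : 0 ≤ 1 - α * lam' := by
    nlinarith [hα4, hlam'le1, hlam'pos.le, hα.le]
  set cc : ℝ := Real.sqrt (1 - α * lam') with hccdef
  have hc1 : cc < 1 := by
    rw [hccdef]
    have hlt : 1 - α * lam' < 1 := by nlinarith [hlam'pos, hα]
    have h := Real.sqrt_lt_sqrt hαlamnn hlt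
    rwa [Real.sqrt_one] at h
  have henorm : ∀ v : Fin n → ℝ,
      ‖(WithLp.equiv 2 (Fin n → ℝ)).symm v‖ = Real.sqrt (v ⬝ᵥ v) := by
    intro v
    rw [EuclideanSpace.norm_eq]
    congr 1
    refine Finset.sum_congr rfl fun i _ => ?_
    rw [Real.norm_eq_abs, sq_abs, sq]
    rfl
  have hnorm : ind2norm M ≤ cc := by
    rw [ind2norm]
    apply ContinuousLinearMap.opNorm_le_bound _ (Real.sqrt_nonneg _)
    intro z
    set xv : Fin n → ℝ := WithLp.equiv 2 (Fin n → ℝ) z with hxv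
    have hz : z = (WithLp.equiv 2 (Fin n → ℝ)).symm xv := by rw [hxv]; simp
    have happ : Matrix.toEuclideanCLM (𝕜 := ℝ) M z
        = (WithLp.equiv 2 (Fin n → ℝ)).symm (M.mulVec xv) := by
      rw [hz]
      exact Matrix.toEuclideanCLM_toLp M xv
    rw [happ, henorm, hz, henorm]
    calc Real.sqrt ((M.mulVec xv) ⬝ᵥ (M.mulVec xv))
        ≤ Real.sqrt ((1 - α * lam') * (xv ⬝ᵥ xv)) := Real.sqrt_le_sqrt (hkey xv)
      _ = cc * Real.sqrt (xv ⬝ᵥ xv) := by rw [Real.sqrt_mul hαlamnn]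
  exact ⟨W, hW1, hWT1, hWzero, lt_of_le_of_lt hnorm hc1⟩
end

section
/- Let n ≥ 2 and let G = (V,E) be an undirected connected graph on V = {1,…,n} with (i,i) ∈ E for every i. Suppose W ∈ ℝ^{n×n} is entrywise nonnegative and satisfies W1 = 1, Wᵀ1 = 1, and W_{ij} > 0 for every (i,j) ∈ E. Then ρ(W − (1/n)11ᵀ) < 1. -/
open Matrix Filter

-- z.re = abs z → z = re
lemma eq_re_of_re_eq_abs {z : ℂ} (h : z.re = ‖z‖) : z = (z.re : ℂ) := by
  have h2 : Complex.normSq z = z.re ^ 2 := by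
    rw [← Complex.sq_norm, ← h]
  have him : z.im = 0 := by
    have := Complex.normSq_apply z
    nlinarith [this, h2]
  exact Complex.ext rfl him

theorem eig_bound
    (n : ℕ) (hn : 2 ≤ n) (E : Fin n → Fin n → Prop)
    (hrefl : ∀ i, E i i)
    (hconn : ∀ i j, Relation.ReflTransGen E i j)
    (W : Matrix (Fin n) (Fin n) ℝ)
    (hnonneg : ∀ i j, 0 ≤ W i j)
    (hrow : W.mulVec (fun _ => 1) = (fun _ => 1))
    (hcol : Wᵀ.mulVec (fun _ => 1) = (fun _ => 1))
    (hpos : ∀ i j, E i j → 0 < W i j)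
    (μ : ℂ) (v : Fin n → ℂ) (hv : v ≠ 0)
    (heig : ((W - Jmat n).map Complex.ofReal).mulVec v = μ • v) :
    ‖μ‖ < 1 := by
  have hn0 : (0:ℝ) < n := by positivity
  have hnn : (n:ℝ) ≠ 0 := ne_of_gt hn0
  -- row sums of W are 1
  have hrowsum : ∀ i, ∑ j, W i j = 1 := by
    intro i
    have := congrFun hrow i
    simpa [mulVec, dotProduct] using this
  have hcolsum : ∀ j, ∑ i, W i j = 1 := by
    intro j
    have := congrFun hcol j
    simpa [mulVec, dotProduct, transpose] using this
  by_cases hμ0 : μ = 0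
  · simp [hμ0]
  -- sum of v is 0
  have hsumM : ∀ j, ∑ i, ((W - Jmat n) i j : ℝ) = 0 := by
    intro j
    simp [Matrix.sub_apply, Finset.sum_sub_distrib, hcolsum j, Jmat]
    field_simp
    ring
  have hSv : ∑ j, v j = 0 := by
    have h1 : ∑ i, (((W - Jmat n).map Complex.ofReal).mulVec v) i = μ * ∑ j, v j := by
      rw [heig]
      simp [Finset.mul_sum, smul_eq_mul]
    have h2 : ∑ i, (((W - Jmat n).map Complex.ofReal).mulVec v) i = 0 := by
      simp only [mulVec, dotProduct, map_apply]
      rw [Finset.sum_comm]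
      apply Finset.sum_eq_zero
      intro j _
      rw [← Finset.sum_mul]
      have : ∑ i, ((W - Jmat n) i j : ℂ) = 0 := by
        have h := hsumM j
        exact_mod_cast congrArg (Complex.ofReal) h
      rw [this, zero_mul]
    rw [h2] at h1
    exact (mul_eq_zero.mp h1.symm).resolve_left hμ0
  -- hence W v = μ v
  have heigW : ∀ i, ∑ j, (W i j : ℂ) * v j = μ * v i := by
    intro i
    have := congrFun heig i
    simp only [mulVec, dotProduct, map_apply, Pi.smul_apply, smul_eq_mul] at this
    have hJ : ∑ j, (((1:ℝ)/n : ℝ) : ℂ) * v j = 0 := by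
      rw [← Finset.mul_sum, hSv, mul_zero]
    calc ∑ j, (W i j : ℂ) * v j
        = ∑ j, (((W - Jmat n) i j : ℝ) : ℂ) * v j + ∑ j, (((1:ℝ)/n : ℝ) : ℂ) * v j := by
          rw [← Finset.sum_add_distrib]
          congr 1; ext j
          simp [Matrix.sub_apply, Jmat, Complex.ofReal_sub, sub_mul]
      _ = μ * v i := by rw [hJ, add_zero, this]
  -- max modulus index
  obtain ⟨i0, -, hi0⟩ := Finset.exists_max_image Finset.univ (fun k => ‖v k‖)
    ⟨⟨0, by omega⟩, Finset.mem_univ _⟩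
  set c := ‖v i0‖ with hc
  have hle : ∀ k, ‖v k‖ ≤ c := fun k => hi0 k (Finset.mem_univ k)
  have hcpos : 0 < c := by
    obtain ⟨k, hk⟩ := Function.ne_iff.mp hv
    exact lt_of_lt_of_le (by simpa using hk) (hle k)
  by_contra hcon
  push_neg at hcon
  -- first: abs μ ≤ 1
  have habs1 : ‖μ‖ ≤ 1 := by
    have h1 : ‖μ‖ * c ≤ c := by
      calc ‖μ‖ * c = ‖μ * v i0‖ := by rw [norm_mul]
        _ = ‖∑ j, (W i0 j : ℂ) * v j‖ := by rw [heigW i0]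
        _ ≤ ∑ j, ‖(W i0 j : ℂ) * v j‖ := norm_sum_le _ _
        _ = ∑ j, W i0 j * ‖v j‖ := by
            congr 1; ext j
            rw [norm_mul, Complex.norm_real, Real.norm_eq_abs, abs_of_nonneg (hnonneg i0 j)]
        _ ≤ ∑ j, W i0 j * c := by
            apply Finset.sum_le_sum
            intro j _
            exact mul_le_mul_of_nonneg_left (hle j) (hnonneg i0 j)
        _ = c := by rw [← Finset.sum_mul, hrowsum i0, one_mul]
    nlinarith
  have habs : ‖μ‖ = 1 := le_antisymm habs1 hcon
  -- key alignment lemma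
  have key : ∀ j, ‖v j‖ = c → ∀ k, 0 < W j k → v k = μ * v j := by
    intro j hj k hk
    set s := μ * v j with hs
    have hss : ‖s‖ = c := by rw [hs, norm_mul, habs, one_mul, hj]
    have hsne : s ≠ 0 := by
      intro h; rw [h, norm_zero] at hss; exact hcpos.ne hss
    set r : Fin n → ℝ := fun k => (v k * (starRingEnd ℂ) s).re with hr
    have hrle : ∀ k, r k ≤ c * c := by
      intro k
      calc r k ≤ ‖v k * (starRingEnd ℂ) s‖ := Complex.re_le_norm _
        _ = ‖v k‖ * c := by rw [norm_mul, Complex.norm_conj, hss]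
        _ ≤ c * c := mul_le_mul_of_nonneg_right (hle k) (le_of_lt hcpos)
    have hsum : ∑ k, W j k * r k = c * c := by
      have : ∑ k, W j k * r k = ((∑ k, (W j k : ℂ) * v k) * (starRingEnd ℂ) s).re := by
        rw [Finset.sum_mul, Complex.re_sum]
        congr 1; ext k
        rw [mul_assoc, Complex.re_ofReal_mul]
      rw [this, heigW j, ← hs, Complex.mul_conj]
      rw [Complex.ofReal_re]  -- normSq s : ℝ cast
      rw [← Complex.sq_norm, hss]; ring
    have hzero : ∀ k, 0 < W j k → r k = c * c := by
      intro k hk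
      by_contra hne
      have hlt : r k < c * c := lt_of_le_of_ne (hrle k) hne
      have : ∑ k, W j k * r k < c * c := by
        calc ∑ k, W j k * r k < ∑ k, W j k * (c * c) := by
              apply Finset.sum_lt_sum
              · intro m _; exact mul_le_mul_of_nonneg_left (hrle m) (hnonneg j m)
              · exact ⟨k, Finset.mem_univ k, by nlinarith⟩
          _ = c * c := by rw [← Finset.sum_mul, hrowsum j, one_mul]
      linarith [hsum]
    have hrk := hzero k hk
    -- v k * conj s = c*c
    have habsle : ‖v k * (starRingEnd ℂ) s‖ ≤ c * c := by
      rw [norm_mul, Complex.norm_conj, hss]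
      exact mul_le_mul_of_nonneg_right (hle k) (le_of_lt hcpos)
    have hre : (v k * (starRingEnd ℂ) s).re = ‖v k * (starRingEnd ℂ) s‖ :=
      le_antisymm (Complex.re_le_norm _) (by rw [← hr.symm] at *; linarith [hrk, habsle])
    have heq : v k * (starRingEnd ℂ) s = ((c * c : ℝ) : ℂ) := by
      have h5 := eq_re_of_re_eq_abs hre
      rw [h5]
      exact_mod_cast hrk
    have hsc : s * (starRingEnd ℂ) s = ((c * c : ℝ) : ℂ) := by
      rw [Complex.mul_conj, ← Complex.sq_norm, hss]
      norm_cast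
      ring
    have : (v k - s) * (starRingEnd ℂ) s = 0 := by rw [sub_mul, heq, hsc, sub_self]
    have hconj : (starRingEnd ℂ) s ≠ 0 := by
      simpa using hsne
    have := (mul_eq_zero.mp this).resolve_right hconj
    exact sub_eq_zero.mp this
  -- μ = 1
  have hvi0 : v i0 ≠ 0 := by
    intro h; rw [h, norm_zero] at hc; exact hcpos.ne' hc
  have hμ1 : μ = 1 := by
    have := key i0 rfl i0 (hpos i0 i0 (hrefl i0))
    have h2 : (μ - 1) * v i0 = 0 := by rw [sub_mul, one_mul, ← this, sub_self]
    have := (mul_eq_zero.mp h2).resolve_right hvi0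
    exact sub_eq_zero.mp this
  -- all components equal
  have hall : ∀ j, v j = v i0 := by
    intro j
    induction hconn i0 j with
    | refl => rfl
    | tail hab e ih =>
      rename_i b cc
      have hb : ‖v b‖ = c := by rw [ih]
      have := key b hb cc (hpos b cc e)
      rw [this, hμ1, one_mul, ih]
  have : (n : ℂ) * v i0 = 0 := by
    rw [← hSv]
    simp [hall, Finset.sum_const]
  have hvz : v i0 = 0 := by
    have hnc : (n : ℂ) ≠ 0 := by exact_mod_cast Nat.cast_ne_zero.mpr (by omega)
    exact (mul_eq_zero.mp this).resolve_left hnc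
  exact hvi0 hvz


theorem positive_weights_on_connected_graph_spectral_radius_lt_one
    (n : ℕ) (hn : 2 ≤ n) (E : Fin n → Fin n → Prop)
    (hsymm : ∀ i j, E i j → E j i)
    (hrefl : ∀ i, E i i)
    (hconn : ∀ i j, Relation.ReflTransGen E i j)
    (W : Matrix (Fin n) (Fin n) ℝ)
    (hnonneg : ∀ i j, 0 ≤ W i j)
    (hrow : W.mulVec (fun _ => 1) = (fun _ => 1))
    (hcol : Wᵀ.mulVec (fun _ => 1) = (fun _ => 1))
    (hpos : ∀ i j, E i j → 0 < W i j) :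
    specRad (W - Jmat n) < 1 := by
  haveI : NeZero n := ⟨by omega⟩
  set Mc := (W - Jmat n).map Complex.ofReal with hMc
  have hspec : spectrum ℂ Mc = spectrum ℂ (Matrix.toLin' Mc) :=
    (AlgEquiv.spectrum_eq (Matrix.toLinAlgEquiv' ) Mc).symm
  have key : ∀ μ ∈ spectrum ℂ Mc, ‖μ‖ < 1 := by
    intro μ hμ
    rw [hspec] at hμ
    have heig : Module.End.HasEigenvalue (Matrix.toLin' Mc) μ :=
      Module.End.hasEigenvalue_iff_mem_spectrum.mpr hμ
    obtain ⟨v, hv1, hv2⟩ := heig.exists_hasEigenvector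
    have hmv : Mc.mulVec v = μ • v := by
      have := Module.End.mem_eigenspace_iff.mp hv1
      rwa [Matrix.toLin'_apply] at this
    exact eig_bound n hn E hrefl hconn W hnonneg hrow hcol hpos μ v hv2 hmv
  have hSeq : {r : ℝ | ∃ μ : ℂ, μ ∈ spectrum ℂ Mc ∧ r = ‖μ‖}
      = (fun z : ℂ => ‖z‖) '' spectrum ℂ Mc := by
    ext r
    constructor
    · rintro ⟨μ, hμ, rfl⟩; exact ⟨μ, hμ, rfl⟩
    · rintro ⟨μ, hμ, rfl⟩; exact ⟨μ, hμ, rfl⟩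
  have hfin : {r : ℝ | ∃ μ : ℂ, μ ∈ spectrum ℂ Mc ∧ r = ‖μ‖}.Finite := by
    rw [hSeq]; exact (Matrix.finite_spectrum Mc).image _
  have hne : {r : ℝ | ∃ μ : ℂ, μ ∈ spectrum ℂ Mc ∧ r = ‖μ‖}.Nonempty := by
    obtain ⟨μ0, hμ0⟩ := Module.End.exists_eigenvalue (Matrix.toLin' Mc)
    exact ⟨‖μ0‖, μ0, by rw [hspec]; exact Module.End.hasEigenvalue_iff_mem_spectrum.mp hμ0, rfl⟩
  rw [specRad, Set.Finite.csSup_lt_iff hfin hne]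
  rintro r ⟨μ, hμ, rfl⟩
  exact key μ hμ
end

section
/- Let n ≥ 1 and suppose W ∈ ℝ^{n×n} is entrywise nonnegative and satisfies W1 = 1 and Wᵀ1 = 1. Then W is primitive (i.e., there exists m ≥ 1 such that all entries of W^m are strictly positive) if and only if ρ(W − (1/n)11ᵀ) < 1. -/
open Matrix Filter
open scoped ENNReal NNReal

/-- eigenvalue characterization of matrix spectrum over ℂ -/
theorem spec_mem_iff {n : ℕ} (M : Matrix (Fin n) (Fin n) ℂ) (μ : ℂ) :
    μ ∈ spectrum ℂ M ↔ ∃ v ≠ 0, M.mulVec v = μ • v := by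
  rw [spectrum.mem_iff, Matrix.isUnit_iff_isUnit_det, isUnit_iff_ne_zero, not_not,
    ← Matrix.exists_mulVec_eq_zero_iff]
  have key : ∀ v : Fin n → ℂ, ((algebraMap ℂ (Matrix (Fin n) (Fin n) ℂ)) μ - M).mulVec v
      = μ • v - M.mulVec v := by
    intro v
    rw [Matrix.sub_mulVec, Matrix.algebraMap_eq_diagonal]
    ext i
    simp [Matrix.mulVec_diagonal]
  constructor
  · rintro ⟨v, hv, h⟩
    exact ⟨v, hv, by rw [key v, sub_eq_zero] at h; exact h.symm⟩
  · rintro ⟨v, hv, h⟩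
    exact ⟨v, hv, by rw [key v, h, sub_self]⟩

/-- the set defining specRad is the image of the spectrum under abs -/
theorem specRad_set_eq {n : ℕ} (A : Matrix (Fin n) (Fin n) ℝ) :
    {r : ℝ | ∃ μ : ℂ, μ ∈ spectrum ℂ (A.map Complex.ofReal) ∧ r = ‖μ‖}
      = (fun μ : ℂ => ‖μ‖) '' spectrum ℂ (A.map Complex.ofReal) := by
  ext r
  simp [Set.mem_image, eq_comm, and_comm]

theorem specRad_set_finite {n : ℕ} (A : Matrix (Fin n) (Fin n) ℝ) :
    {r : ℝ | ∃ μ : ℂ, μ ∈ spectrum ℂ (A.map Complex.ofReal) ∧ r = ‖μ‖}.Finite := by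
  rw [specRad_set_eq]
  exact (Matrix.finite_spectrum _).image _

theorem primitive_iff_spectral_radius_lt_one
    (n : ℕ) (hn : 1 ≤ n) (W : Matrix (Fin n) (Fin n) ℝ)
    (hnonneg : ∀ i j, 0 ≤ W i j)
    (hrow : W.mulVec (fun _ => 1) = (fun _ => 1))
    (hcol : Wᵀ.mulVec (fun _ => 1) = (fun _ => 1)) :
    (∃ m : ℕ, 1 ≤ m ∧ ∀ i j, 0 < (W ^ m) i j) ↔ specRad (W - Jmat n) < 1 := by
  have hn0 : (0:ℝ) < n := by exact_mod_cast hn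
  have hnne : (n:ℝ) ≠ 0 := ne_of_gt hn0
  set A : Matrix (Fin n) (Fin n) ℝ := W - Jmat n with hA
  -- basic sum facts
  have rowsumW : ∀ i, ∑ j, W i j = 1 := by
    intro i
    have := congrFun hrow i
    simpa [Matrix.mulVec, dotProduct] using this
  have colsumW : ∀ j, ∑ i, W i j = 1 := by
    intro j
    have := congrFun hcol j
    simpa [Matrix.mulVec, dotProduct, Matrix.transpose_apply] using this
  -- algebra of J
  have hWJ : W * Jmat n = Jmat n := by
    ext i j
    simp only [Matrix.mul_apply, Jmat, Matrix.of_apply, one_div]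
    rw [← Finset.sum_mul, rowsumW i, one_mul]
  have hJW : Jmat n * W = Jmat n := by
    ext i j
    simp only [Matrix.mul_apply, Jmat, Matrix.of_apply, one_div]
    rw [← Finset.mul_sum, colsumW j, mul_one]
  have hJJ : Jmat n * Jmat n = Jmat n := by
    ext i j
    simp [Matrix.mul_apply, Jmat]
    field_simp
  have hpowWJ : ∀ k : ℕ, W ^ k * Jmat n = Jmat n := by
    intro k
    induction k with
    | zero => simp
    | succ k ih => rw [pow_succ, mul_assoc, hWJ, ih]
  have hpowA : ∀ m : ℕ, 1 ≤ m → A ^ m = W ^ m - Jmat n := by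
    intro m hm
    induction m, hm using Nat.le_induction with
    | base => simp [hA]
    | succ m hm ih =>
      rw [pow_succ, ih, hA, pow_succ]
      rw [sub_mul, mul_sub, mul_sub, hpowWJ, hJW, hJJ, sub_self, sub_zero]
  -- row sums of powers
  have rowsumPow : ∀ m : ℕ, ∀ i, ∑ j, (W ^ m) i j = 1 := by
    intro m
    induction m with
    | zero => intro i; simp [Matrix.one_apply]
    | succ m ih =>
      intro i
      rw [pow_succ]
      simp only [Matrix.mul_apply]
      rw [Finset.sum_comm]
      calc ∑ k, ∑ j, (W ^ m) i k * W k j = ∑ k, (W ^ m) i k * ∑ j, W k j := by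
            simp [Finset.mul_sum]
        _ = 1 := by simp [rowsumW, ih i]
  have colsumPow : ∀ m : ℕ, ∀ j, ∑ i, (W ^ m) i j = 1 := by
    intro m
    induction m with
    | zero => intro j; simp [Matrix.one_apply]
    | succ m ih =>
      intro j
      rw [pow_succ]
      simp only [Matrix.mul_apply]
      rw [Finset.sum_comm]
      calc ∑ k, ∑ i, (W ^ m) i k * W k j = ∑ k, (∑ i, (W ^ m) i k) * W k j := by
            simp [Finset.sum_mul]
        _ = 1 := by simp [ih, colsumW j]
  -- column sums of A vanish
  have colsumA : ∀ j, ∑ i, A i j = 0 := by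
    intro j
    simp [hA, Matrix.sub_apply, Finset.sum_sub_distrib, colsumW j, Jmat]
    field_simp
    norm_num
  -- spectrum facts
  have powNonneg : ∀ m : ℕ, ∀ i j, 0 ≤ (W ^ m) i j := by
    intro m
    induction m with
    | zero => intro i j; by_cases h : i = j <;> simp [Matrix.one_apply, h]
    | succ m ih =>
      intro i j
      rw [pow_succ, Matrix.mul_apply]
      exact Finset.sum_nonneg fun k _ => mul_nonneg (ih i k) (hnonneg k j)
  -- forward core: primitivity forces all eigenvalues of A to have modulus < 1
  have key : (∃ m : ℕ, 1 ≤ m ∧ ∀ i j, 0 < (W ^ m) i j) →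
      ∀ μ ∈ spectrum ℂ (A.map Complex.ofReal), ‖μ‖ < 1 := by
    rintro ⟨m, hm, hpos⟩ μ hμ
    obtain ⟨v, hv, hAv⟩ := (spec_mem_iff _ μ).mp hμ
    by_cases hμ0 : μ = 0
    · simp [hμ0]
    -- the entries of v sum to zero
    have hsumv : ∑ j, v j = 0 := by
      have h2 : ∑ i, ((A.map Complex.ofReal).mulVec v) i = 0 := by
        simp only [Matrix.mulVec, dotProduct, Matrix.map_apply]
        rw [Finset.sum_comm]
        have hz : ∀ j, ∑ i, (A i j : ℂ) * v j = 0 := by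
          intro j
          rw [← Finset.sum_mul, ← Complex.ofReal_sum, colsumA j]
          simp
        simp [hz]
      rw [hAv] at h2
      have : μ * ∑ j, v j = 0 := by
        rw [Finset.mul_sum]
        simpa [Pi.smul_apply, smul_eq_mul] using h2
      rcases mul_eq_zero.mp this with h | h
      · exact absurd h hμ0
      · exact h
    -- v is an eigenvector of W itself
    have hWv : (W.map Complex.ofReal).mulVec v = μ • v := by
      funext i
      have hAi := congrFun hAv i
      simp only [Matrix.mulVec, dotProduct, Matrix.map_apply] at hAi ⊢
      have hsplit : ∀ j, (A i j : ℂ) * v j = (W i j : ℂ) * v j - ((1:ℂ)/n) * v j := by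
        intro j
        have : (A i j : ℂ) = (W i j : ℂ) - (1:ℂ)/n := by
          simp [hA, Matrix.sub_apply, Jmat]
        rw [this]; ring
      rw [Finset.sum_congr rfl (fun j _ => hsplit j), Finset.sum_sub_distrib,
        ← Finset.mul_sum, hsumv, mul_zero, sub_zero] at hAi
      exact hAi
    -- v is an eigenvector of W^m with eigenvalue μ^m
    have hWm : ∀ k : ℕ, ((W ^ k).map Complex.ofReal).mulVec v = (μ ^ k) • v := by
      intro k
      induction k with
      | zero => simp [Matrix.map_one]
      | succ k ih =>
        have hmapmul : (W ^ (k+1)).map Complex.ofReal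
            = ((W ^ k).map Complex.ofReal) * (W.map Complex.ofReal) := by
          rw [pow_succ]
          exact Matrix.map_mul (f := Complex.ofRealHom)
        rw [hmapmul, ← Matrix.mulVec_mulVec, hWv, Matrix.mulVec_smul, ih,
          smul_smul, ← pow_succ']
    -- maximum modulus setup
    haveI : Nonempty (Fin n) := ⟨⟨0, by omega⟩⟩
    set u : Fin n → ℝ := fun j => ‖v j‖ with hu
    obtain ⟨i0, -, hi0⟩ := Finset.exists_max_image Finset.univ u Finset.univ_nonempty
    set M := u i0 with hMdef
    have hMmax : ∀ j, u j ≤ M := fun j => hi0 j (Finset.mem_univ j)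
    have hMpos : 0 < M := by
      obtain ⟨k, hk⟩ := Function.ne_iff.mp hv
      calc (0:ℝ) < u k := by simpa [hu] using (norm_pos_iff.mpr hk)
        _ ≤ M := hMmax k
    set B := W ^ m with hB
    have hposB : ∀ i j, 0 < B i j := hpos
    have rowsumB : ∀ i, ∑ j, B i j = 1 := rowsumPow m
    have hBv : ((B.map Complex.ofReal).mulVec v) = (μ ^ m) • v := hWm m
    set s : ℂ := ((B.map Complex.ofReal).mulVec v) i0 with hs
    have hs_expand : s = ∑ j, ((B i0 j : ℝ) : ℂ) * v j := by
      simp [hs, Matrix.mulVec, dotProduct, Matrix.map_apply]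
    have habs : ‖s‖ = ‖μ‖ ^ m * M := by
      rw [hs, hBv]
      simp [hu, norm_mul, norm_pow, hMdef]
    have hineq1 : ‖s‖ ≤ ∑ j, B i0 j * u j := by
      rw [hs_expand]
      refine (norm_sum_le _ _).trans (le_of_eq ?_)
      refine Finset.sum_congr rfl fun j _ => ?_
      rw [norm_mul, Complex.norm_real, Real.norm_of_nonneg (hposB i0 j).le]
    have hineq2 : ∑ j, B i0 j * u j ≤ M := by
      calc ∑ j, B i0 j * u j ≤ ∑ j, B i0 j * M :=
            Finset.sum_le_sum fun j _ => mul_le_mul_of_nonneg_left (hMmax j) (hposB i0 j).le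
        _ = M := by rw [← Finset.sum_mul, rowsumB i0, one_mul]
    have hpowle : ‖μ‖ ^ m ≤ 1 := by
      have h := hineq1.trans hineq2
      rw [habs] at h
      exact le_of_mul_le_mul_right (by rw [one_mul]; exact h) hMpos
    have habsle : ‖μ‖ ≤ 1 :=
      (pow_le_one_iff_of_nonneg (norm_nonneg μ) (by omega)).mp hpowle
    rcases lt_or_eq_of_le habsle with h | heq
    · exact h
    exfalso
    have habs_s : ‖s‖ = M := by rw [habs, heq, one_pow, one_mul]
    have hsumeq : ∑ j, B i0 j * u j = M := le_antisymm hineq2 (habs_s ▸ hineq1)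
    have hallM : ∀ j, u j = M := by
      intro j
      by_contra hj0
      have hlt : u j < M := lt_of_le_of_ne (hMmax j) hj0
      have hstrict : ∑ k, B i0 k * u k < ∑ k, B i0 k * M :=
        Finset.sum_lt_sum (fun k _ => mul_le_mul_of_nonneg_left (hMmax k) (hposB i0 k).le)
          ⟨j, Finset.mem_univ j, mul_lt_mul_of_pos_left hlt (hposB i0 j)⟩
      rw [hsumeq, ← Finset.sum_mul, rowsumB i0, one_mul] at hstrict
      exact lt_irrefl M hstrict
    -- equality in the triangle inequality: alignment
    have hterm : ∀ j, ((starRingEnd ℂ) s * v j).re ≤ M ^ 2 := by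
      intro j
      calc ((starRingEnd ℂ) s * v j).re ≤ ‖(starRingEnd ℂ) s * v j‖ :=
            Complex.re_le_norm _
        _ = M * u j := by rw [norm_mul, Complex.norm_conj, habs_s]
        _ = M ^ 2 := by rw [hallM j, sq]
    have hsum2 : ∑ j, B i0 j * ((starRingEnd ℂ) s * v j).re = M ^ 2 := by
      have e1 : ((starRingEnd ℂ) s * s).re = M ^ 2 := by
        rw [mul_comm, Complex.mul_conj]
        rw [Complex.normSq_eq_norm_sq, habs_s]
        norm_cast
      calc ∑ j, B i0 j * ((starRingEnd ℂ) s * v j).re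
          = (∑ j, (starRingEnd ℂ) s * (((B i0 j : ℝ):ℂ) * v j)).re := by
            rw [Complex.re_sum]
            refine Finset.sum_congr rfl fun j _ => ?_
            rw [show (starRingEnd ℂ) s * (((B i0 j : ℝ):ℂ) * v j)
              = ((B i0 j : ℝ):ℂ) * ((starRingEnd ℂ) s * v j) by ring]
            rw [Complex.re_ofReal_mul]
        _ = ((starRingEnd ℂ) s * ∑ j, ((B i0 j : ℝ):ℂ) * v j).re := by rw [← Finset.mul_sum]
        _ = M ^ 2 := by rw [← hs_expand, e1]
    have hre : ∀ j, ((starRingEnd ℂ) s * v j).re = M ^ 2 := by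
      intro j
      by_contra hj0
      have hlt : ((starRingEnd ℂ) s * v j).re < M ^ 2 := lt_of_le_of_ne (hterm j) hj0
      have hstrict : ∑ k, B i0 k * ((starRingEnd ℂ) s * v k).re < ∑ k, B i0 k * M ^ 2 :=
        Finset.sum_lt_sum (fun k _ => mul_le_mul_of_nonneg_left (hterm k) (hposB i0 k).le)
          ⟨j, Finset.mem_univ j, mul_lt_mul_of_pos_left hlt (hposB i0 j)⟩
      rw [hsum2, ← Finset.sum_mul, rowsumB i0, one_mul] at hstrict
      exact lt_irrefl _ hstrict
    have hveq : ∀ j, v j = s := by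
      intro j
      have h1 : ‖(starRingEnd ℂ) s * v j‖ = M ^ 2 := by
        rw [norm_mul, Complex.norm_conj, habs_s]
        rw [show ‖v j‖ = M from hallM j, sq]
      have him : ((starRingEnd ℂ) s * v j).im = 0 := by
        have h2 := Complex.sq_norm ((starRingEnd ℂ) s * v j)
        rw [h1, Complex.normSq_apply, hre j] at h2
        nlinarith [h2]
      have hz : (starRingEnd ℂ) s * v j = ((M ^ 2 : ℝ) : ℂ) := by
        apply Complex.ext
        · rw [hre j]; norm_cast
        · rw [him]; norm_cast
      have hz2 : (starRingEnd ℂ) s * s = ((M ^ 2 : ℝ) : ℂ) := by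
        rw [mul_comm, Complex.mul_conj, Complex.normSq_eq_norm_sq, habs_s]
      have hsne : (starRingEnd ℂ) s ≠ 0 := by
        simp only [ne_eq, map_eq_zero]
        intro h0
        rw [h0] at habs_s
        simp at habs_s
        exact absurd habs_s.symm (ne_of_gt hMpos)
      exact mul_left_cancel₀ hsne (hz.trans hz2.symm)
    have hns : (n : ℂ) * s = 0 := by
      have : ∑ j, v j = ∑ _j : Fin n, s := Finset.sum_congr rfl fun j _ => hveq j
      rw [hsumv] at this
      rw [Finset.sum_const, Finset.card_univ, Fintype.card_fin, nsmul_eq_mul] at this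
      exact this.symm
    have hs0 : s = 0 := by
      rcases mul_eq_zero.mp hns with h | h
      · exact absurd h (by exact_mod_cast hnne)
      · exact h
    rw [hs0] at habs_s
    simp at habs_s
    exact absurd habs_s.symm (ne_of_gt hMpos)
  constructor
  · -- primitivity implies spectral radius < 1
    intro hprim
    have hall := key hprim
    have hdef : specRad A = sSup {r : ℝ | ∃ μ : ℂ,
        μ ∈ spectrum ℂ (A.map Complex.ofReal) ∧ r = ‖μ‖} := rfl
    rw [hdef]
    rcases Set.eq_empty_or_nonempty {r : ℝ | ∃ μ : ℂ,
        μ ∈ spectrum ℂ (A.map Complex.ofReal) ∧ r = ‖μ‖} with hSe | hSne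
    · rw [hSe, Real.sSup_empty]; norm_num
    · obtain ⟨μ, hμ, hr⟩ := hSne.csSup_mem (specRad_set_finite A)
      rw [hr]
      exact hall μ hμ
  · -- spectral radius < 1 implies primitivity
    intro hlt
    have hbdd : BddAbove {r : ℝ | ∃ μ : ℂ,
        μ ∈ spectrum ℂ (A.map Complex.ofReal) ∧ r = ‖μ‖} :=
      (specRad_set_finite A).bddAbove
    set A' : Matrix (Fin n) (Fin n) ℂ := A.map Complex.ofReal with hA'
    set T : EuclideanSpace ℂ (Fin n) →L[ℂ] EuclideanSpace ℂ (Fin n) :=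
      Matrix.toEuclideanCLM (𝕜 := ℂ) A' with hT
    have hspecT : spectrum ℂ T = spectrum ℂ A' :=
      AlgEquiv.spectrum_eq (Matrix.toEuclideanCLM (𝕜 := ℂ) (n := Fin n)) A'
    haveI : Nonempty (Fin n) := ⟨⟨0, by omega⟩⟩
    have hρ : spectralRadius ℂ T < 1 := by
      have h1 : spectralRadius ℂ T ≤ ENNReal.ofReal (specRad A) := by
        rw [spectralRadius]
        refine iSup₂_le fun μ hμ => ?_
        rw [hspecT] at hμ
        rw [show ((‖μ‖₊ : ℝ≥0) : ℝ≥0∞) = ENNReal.ofReal ‖μ‖ from (ofReal_norm μ).symm]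
        refine ENNReal.ofReal_le_ofReal ?_
        have h2 : ‖μ‖ ≤ specRad A := le_csSup hbdd ⟨μ, hμ, rfl⟩
        exact h2
      exact lt_of_le_of_lt h1 (by rwa [ENNReal.ofReal_lt_one])
    obtain ⟨r, hr1, hr2⟩ := ENNReal.lt_iff_exists_nnreal_btwn.mp hρ
    have hr2' : (r : ℝ) < 1 := by exact_mod_cast hr2
    have hG := spectrum.pow_nnnorm_pow_one_div_tendsto_nhds_spectralRadius T
    have E1 : ∀ᶠ k : ℕ in atTop, (‖T ^ k‖₊ : ℝ≥0∞) ^ (1 / (k : ℝ)) < (r : ℝ≥0∞) :=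
      hG.eventually_lt_const hr1
    have E2 : ∀ᶠ k : ℕ in atTop, (r : ℝ) ^ k < 1 / n := by
      have h0 : (0 : ℝ) < 1 / n := by positivity
      exact (tendsto_pow_atTop_nhds_zero_of_lt_one r.coe_nonneg hr2').eventually_lt_const h0
    obtain ⟨m, hm1, hmE1, hmE2⟩ : ∃ m : ℕ, 1 ≤ m ∧
        ((‖T ^ m‖₊ : ℝ≥0∞) ^ (1 / (m : ℝ)) < (r : ℝ≥0∞)) ∧ ((r : ℝ) ^ m < 1 / n) := by
      obtain ⟨m, h⟩ := ((eventually_ge_atTop 1).and (E1.and E2)).exists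
      exact ⟨m, h.1, h.2.1, h.2.2⟩
    refine ⟨m, hm1, ?_⟩
    have hmpos : (0 : ℝ) < m := by exact_mod_cast hm1
    have hTm : (‖T ^ m‖₊ : ℝ≥0∞) < (r : ℝ≥0∞) ^ (m : ℕ) := by
      calc (‖T ^ m‖₊ : ℝ≥0∞) = ((‖T ^ m‖₊ : ℝ≥0∞) ^ (1 / (m : ℝ))) ^ (m : ℝ) := by
            rw [← ENNReal.rpow_mul, one_div, inv_mul_cancel₀ (ne_of_gt hmpos),
              ENNReal.rpow_one]
        _ < (r : ℝ≥0∞) ^ (m : ℝ) := ENNReal.rpow_lt_rpow hmE1 hmpos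
        _ = (r : ℝ≥0∞) ^ (m : ℕ) := by rw [ENNReal.rpow_natCast]
    have hTm' : ‖T ^ m‖ < (r : ℝ) ^ m := by
      rw [← ENNReal.coe_pow, ENNReal.coe_lt_coe] at hTm
      exact_mod_cast hTm
    have hnorm : ‖T ^ m‖ < 1 / n := lt_trans hTm' hmE2
    -- entrywise bound on A ^ m via the operator norm
    have hmapA : ∀ k : ℕ, (A ^ k).map Complex.ofReal = A' ^ k := by
      intro k
      induction k with
      | zero =>
        ext i j
        by_cases h : i = j <;> simp [Matrix.map_apply, Matrix.one_apply, h]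
      | succ k ih =>
        rw [pow_succ, pow_succ, ← ih]
        exact Matrix.map_mul (f := Complex.ofRealHom)
    have hTpow : T ^ m = Matrix.toEuclideanCLM (𝕜 := ℂ) (A' ^ m) :=
      (map_pow (Matrix.toEuclideanCLM (𝕜 := ℂ)) A' m).symm
    intro i j
    have hentry : |(A ^ m) i j| < 1 / n := by
      set y : EuclideanSpace ℂ (Fin n) := (T ^ m) (EuclideanSpace.single j (1 : ℂ)) with hy
      have hyi : y i = (A' ^ m) i j := by
        rw [hy, hTpow]
        show (Matrix.toEuclideanCLM (𝕜 := ℂ) (A' ^ m))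
          (WithLp.toLp 2 (Pi.single j (1 : ℂ))) i = _
        rw [Matrix.toEuclideanCLM_toLp]
        show ((A' ^ m).mulVec (Pi.single j (1 : ℂ))) i = _
        simp [Matrix.mulVec_single]
      have h1 : ‖y i‖ ≤ ‖y‖ := by
        rw [EuclideanSpace.norm_eq]
        have e1 : ‖y i‖ = Real.sqrt (‖y i‖ ^ 2) := by
          rw [Real.sqrt_sq (norm_nonneg _)]
        rw [e1]
        exact Real.sqrt_le_sqrt (Finset.single_le_sum
          (f := fun k => ‖y k‖ ^ 2) (fun k _ => sq_nonneg _) (Finset.mem_univ i))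
      have h2 : ‖y‖ ≤ ‖T ^ m‖ := by
        calc ‖y‖ ≤ ‖T ^ m‖ * ‖EuclideanSpace.single j (1 : ℂ)‖ :=
              (T ^ m).le_opNorm _
          _ = ‖T ^ m‖ := by rw [EuclideanSpace.norm_single, norm_one, mul_one]
      have h3 : |(A ^ m) i j| = ‖y i‖ := by
        rw [hyi, ← hmapA m]
        simp [Matrix.map_apply, Complex.norm_real]
      rw [h3]
      exact lt_of_le_of_lt (h1.trans h2) hnorm
    have hWmA := hpowA m hm1
    have hWentry : (W ^ m) i j = (A ^ m) i j + 1 / n := by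
      have h := congrFun (congrFun hWmA i) j
      simp only [Matrix.sub_apply, Jmat, Matrix.of_apply] at h
      linarith [h]
    rw [hWentry]
    have habs := abs_lt.mp hentry
    linarith [habs.1]
end

section
/- Let n ≥ 2 and let G be an undirected connected simple graph on vertices {1,…,n} (no self-loops), with d_i denoting the degree of vertex i. Define the Metropolis weight matrix W_M ∈ ℝ^{n×n} by: (W_M)_{ij} = min{1/(1+d_i), 1/(1+d_j)} if i ≠ j and i,j are adjacent; (W_M)_{ij} = 0 if i ≠ j and i,j are not adjacent; and (W_M)_{ii} = 1 − Σ_{j adjacent to i} (W_M)_{ij}. Then W_M is symmetric, entrywise nonnegative, satisfies W_M 1 = 1 and W_Mᵀ 1 = 1, has strictly positive diagonal entries, and satisfies ρ(W_M − (1/n)11ᵀ) < 1, i.e., W_M satisfies the average consensus condition. -/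
open Matrix Filter

private lemma jmat_mulVec {n : ℕ} (v : Fin n → ℝ) :
    (Jmat n).mulVec v = fun _ => (∑ j, v j) / n := by
  funext i
  simp only [Jmat, Matrix.mulVec, dotProduct, Matrix.of_apply, one_div]
  rw [Finset.sum_div]
  exact Finset.sum_congr rfl fun x _ => inv_mul_eq_div _ _

/-- Real eigenvalue bound: any real eigenvalue of `W - J` has modulus `< 1`. -/
private lemma abs_eig_lt_one {n : ℕ} (hn : 2 ≤ n) (G : SimpleGraph (Fin n))
    [DecidableRel G.Adj]
    (hconn : G.Connected) (W : Matrix (Fin n) (Fin n) ℝ)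
    (hsym : ∀ i j, W i j = W j i)
    (hnonneg : ∀ i j, 0 ≤ W i j)
    (hrow : ∀ i, ∑ j, W i j = 1)
    (hdpos : ∀ i, 0 < W i i)
    (hadjpos : ∀ i j, G.Adj i j → 0 < W i j)
    {t : ℝ} {u : Fin n → ℝ} (hu : u ≠ 0)
    (heig : (W - Jmat n).mulVec u = t • u) : |t| < 1 := by
  haveI : Nonempty (Fin n) := ⟨⟨0, lt_of_lt_of_le (by norm_num) hn⟩⟩
  have hnpos : (0:ℝ) < n := by
    exact_mod_cast lt_of_lt_of_le (by norm_num) hn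
  rcases eq_or_ne t 0 with rfl | ht0
  · simp
  have hcol : ∀ j, ∑ i, W i j = 1 := fun j => by
    rw [Finset.sum_congr rfl fun i _ => (hsym i j)]
    exact hrow j
  set s := ∑ j, u j with hs
  have hsub : W.mulVec u - (Jmat n).mulVec u = t • u := by
    rw [← Matrix.sub_mulVec]; exact heig
  -- sum both sides to deduce s = 0
  have hsumW : ∑ i, W.mulVec u i = s := by
    simp only [Matrix.mulVec, dotProduct]
    rw [Finset.sum_comm]
    have : ∀ j, ∑ i, W i j * u j = u j := fun j => by
      rw [← Finset.sum_mul, hcol j, one_mul]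
    rw [Finset.sum_congr rfl fun j _ => this j]
  have hsum0 : s = 0 := by
    have h1 : ∑ i, (W.mulVec u - (Jmat n).mulVec u) i = ∑ i, (t • u) i := by
      rw [hsub]
    have h2 : ∑ i, ((Jmat n).mulVec u) i = s := by
      rw [jmat_mulVec]
      simp only [Finset.sum_const, Finset.card_univ, Fintype.card_fin, nsmul_eq_mul]
      field_simp
      exact hs.symm
    have h3 : ∑ i, (t • u) i = t * s := by
      simp only [Pi.smul_apply, smul_eq_mul, hs, Finset.mul_sum]
    simp only [Pi.sub_apply, Finset.sum_sub_distrib, hsumW, h2, h3] at h1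
    have : t * s = 0 := by linarith
    rcases mul_eq_zero.mp this with h | h
    · exact absurd h ht0
    · exact h
  have hJu : (Jmat n).mulVec u = 0 := by
    rw [jmat_mulVec, ← hs, hsum0]
    funext i; simp
  have hWu' : W.mulVec u = t • u := by
    rw [hJu, sub_zero] at hsub; exact hsub
  have hWu : ∀ i, ∑ j, W i j * u j = t * u i := fun i => by
    have := congrFun hWu' i
    simpa [Matrix.mulVec, dotProduct] using this
  obtain ⟨i0, -, hmax⟩ := Finset.exists_max_image Finset.univ (fun i => |u i|)
    Finset.univ_nonempty
  set M := |u i0| with hM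
  have habs : ∀ j, |u j| ≤ M := fun j => hmax j (Finset.mem_univ j)
  have hMpos : 0 < M := by
    obtain ⟨k, hk⟩ := Function.ne_iff.mp hu
    exact lt_of_lt_of_le (abs_pos.mpr hk) (habs k)
  have hle : |t| ≤ 1 := by
    have h1 : |t| * M = |∑ j, W i0 j * u j| := by
      rw [hWu i0, abs_mul]
    have h2 : |∑ j, W i0 j * u j| ≤ M := by
      calc |∑ j, W i0 j * u j| ≤ ∑ j, |W i0 j * u j| :=
            Finset.abs_sum_le_sum_abs _ _
        _ = ∑ j, W i0 j * |u j| := by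
            refine Finset.sum_congr rfl fun j _ => ?_
            rw [abs_mul, abs_of_nonneg (hnonneg i0 j)]
        _ ≤ ∑ j, W i0 j * M :=
            Finset.sum_le_sum fun j _ =>
              mul_le_mul_of_nonneg_left (habs j) (hnonneg i0 j)
        _ = M := by rw [← Finset.sum_mul, hrow, one_mul]
    have : |t| * M ≤ 1 * M := by rw [one_mul]; linarith
    exact le_of_mul_le_mul_right this hMpos
  refine lt_of_le_of_ne hle ?_
  intro hteq
  rcases (abs_eq zero_le_one).mp hteq with ht1 | ht1
  · -- t = 1 : eigenvector of W for eigenvalue 1 orthogonal to 1, contradict connectivity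
    subst ht1
    obtain ⟨i1, -, hmax1⟩ := Finset.exists_max_image Finset.univ u Finset.univ_nonempty
    set m := u i1 with hm
    have hum : ∀ j, u j ≤ m := fun j => hmax1 j (Finset.mem_univ j)
    have hmpos : 0 < m := by
      by_contra hcon
      push_neg at hcon
      have hzero : ∀ j ∈ Finset.univ, u j = 0 :=
        (Finset.sum_eq_zero_iff_of_nonpos fun j _ => le_trans (hum j) hcon).mp hsum0
      exact hu (funext fun j => hzero j (Finset.mem_univ j))
    have hstep : ∀ i, u i = m → ∀ j, G.Adj i j → u j = m := by
      intro i hi j hij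
      have hz : ∑ k, W i k * (m - u k) = 0 := by
        simp only [mul_sub]
        rw [Finset.sum_sub_distrib, ← Finset.sum_mul, hrow, one_mul, hWu i,
          one_mul, hi, sub_self]
      have hterm := (Finset.sum_eq_zero_iff_of_nonneg fun k _ =>
        mul_nonneg (hnonneg i k) (sub_nonneg.mpr (hum k))).mp hz j (Finset.mem_univ j)
      rcases mul_eq_zero.mp hterm with h | h
      · exact absurd h (ne_of_gt (hadjpos i j hij))
      · linarith [sub_eq_zero.mp h]
    have hwalk : ∀ i j, G.Walk i j → u i = m → u j = m := by
      intro i j w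
      induction w with
      | nil => exact fun h => h
      | cons h p ih => intro hi; exact ih (hstep _ hi _ h)
    have hall : ∀ j, u j = m := fun j =>
      (hconn.preconnected i1 j).elim fun w => hwalk _ _ w rfl
    have : s = n * m := by
      rw [hs, Finset.sum_congr rfl fun j _ => hall j]
      simp [Finset.sum_const, Finset.card_univ, mul_comm]
    nlinarith
  · -- t = -1 : contradicts positive diagonal
    subst ht1
    have hW0 := hWu i0
    have hsplit : W i0 i0 * u i0 + ∑ j ∈ Finset.univ.erase i0, W i0 j * u j
        = ∑ j, W i0 j * u j :=
      Finset.add_sum_erase Finset.univ (fun j => W i0 j * u j) (Finset.mem_univ i0)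
    have hrow' : W i0 i0 + ∑ j ∈ Finset.univ.erase i0, W i0 j = 1 :=
      (Finset.add_sum_erase Finset.univ (fun j => W i0 j) (Finset.mem_univ i0)).trans (hrow i0)
    have heq : ∑ j ∈ Finset.univ.erase i0, W i0 j * u j
        = -((1 + W i0 i0) * u i0) := by
      rw [← hsplit] at hW0
      linarith [hW0]
    have hb : |∑ j ∈ Finset.univ.erase i0, W i0 j * u j|
        ≤ (1 - W i0 i0) * M := by
      calc |∑ j ∈ Finset.univ.erase i0, W i0 j * u j|
          ≤ ∑ j ∈ Finset.univ.erase i0, |W i0 j * u j| :=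
            Finset.abs_sum_le_sum_abs _ _
        _ ≤ ∑ j ∈ Finset.univ.erase i0, W i0 j * M := by
            refine Finset.sum_le_sum fun j _ => ?_
            rw [abs_mul, abs_of_nonneg (hnonneg i0 j)]
            exact mul_le_mul_of_nonneg_left (habs j) (hnonneg i0 j)
        _ = (1 - W i0 i0) * M := by
            rw [← Finset.sum_mul]
            congr 1
            linarith [hrow']
    rw [heq] at hb
    have hx : |(-((1 + W i0 i0) * u i0))| = (1 + W i0 i0) * M := by
      rw [abs_neg, abs_mul, abs_of_nonneg (by linarith [hdpos i0, hnonneg i0 i0] : (0:ℝ) ≤ 1 + W i0 i0)]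
    rw [hx] at hb
    nlinarith [hdpos i0]

/-- Every complex spectral value of a real symmetric matrix has the modulus of a real
eigenvalue (with real eigenvector). -/
private lemma spec_abs_bound {n : ℕ} (A : Matrix (Fin n) (Fin n) ℝ) (hA : Aᵀ = A)
    {μ : ℂ} (hμ : μ ∈ spectrum ℂ (A.map Complex.ofReal)) :
    ∃ (t : ℝ) (u : Fin n → ℝ), u ≠ 0 ∧ A.mulVec u = t • u ∧ ‖μ‖ = |t| := by
  have hherm : (A.map Complex.ofReal).IsHermitian := by
    ext i j
    simp only [conjTranspose_apply, map_apply, Complex.star_def, Complex.conj_ofReal]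
    rw [show A j i = A i j from by conv_lhs => rw [← hA, transpose_apply]]
  have hre : ∃ i, (hherm.eigenvalues i : ℂ) = μ := by
    rw [hherm.spectral_theorem, Unitary.conjStarAlgAut_apply, Unitary.spectrum_star_right_conjugate,
      spectrum_diagonal] at hμ
    obtain ⟨i, hi⟩ := hμ
    exact ⟨i, hi⟩
  obtain ⟨i, hi⟩ := hre
  set t := hherm.eigenvalues i with htdef
  have hspecC : t ∈ spectrum ℝ (A.map Complex.ofReal) :=
    hherm.eigenvalues_mem_spectrum_real i
  have hspecR : t ∈ spectrum ℝ A := by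
    rw [spectrum.mem_iff] at hspecC ⊢
    intro hcon
    apply hspecC
    have key : algebraMap ℝ (Matrix (Fin n) (Fin n) ℂ) t - A.map Complex.ofReal
        = (algebraMap ℝ (Matrix (Fin n) (Fin n) ℝ) t - A).map Complex.ofReal := by
      ext i j
      by_cases hij : i = j <;>
        simp [Matrix.algebraMap_matrix_apply, hij, Matrix.map_apply]
    rw [key]
    rw [Matrix.isUnit_iff_isUnit_det] at hcon ⊢
    rw [show ((algebraMap ℝ (Matrix (Fin n) (Fin n) ℝ)) t - A).map Complex.ofReal
      = (Complex.ofRealHom : ℝ →+* ℂ).mapMatrix _ from rfl, ← RingHom.map_det]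
    simpa using hcon
  rw [← AlgEquiv.spectrum_eq Matrix.toLinAlgEquiv' A,
    ← Module.End.hasEigenvalue_iff_mem_spectrum] at hspecR
  obtain ⟨v, hv⟩ := hspecR.exists_hasEigenvector
  exact ⟨t, v, hv.2, hv.apply_eq_smul, by rw [← hi]; simp⟩

theorem metropolis_weights_satisfy_consensus_condition
    (n : ℕ) (hn : 2 ≤ n) (G : SimpleGraph (Fin n)) [DecidableRel G.Adj]
    (hconn : G.Connected)
    (WM : Matrix (Fin n) (Fin n) ℝ)
    (hadj : ∀ i j, i ≠ j → G.Adj i j →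
      WM i j = min (1 / (1 + (G.degree i : ℝ))) (1 / (1 + (G.degree j : ℝ))))
    (hnadj : ∀ i j, i ≠ j → ¬ G.Adj i j → WM i j = 0)
    (hdiag : ∀ i, WM i i = 1 - ∑ j ∈ G.neighborFinset i, WM i j) :
    WM.IsSymm ∧
    (∀ i j, 0 ≤ WM i j) ∧
    WM.mulVec (fun _ => 1) = (fun _ => 1) ∧
    WMᵀ.mulVec (fun _ => 1) = (fun _ => 1) ∧
    (∀ i, 0 < WM i i) ∧
    specRad (WM - Jmat n) < 1 := by
  have hdeg : ∀ i : Fin n, (0:ℝ) < 1 + (G.degree i : ℝ) := fun i => by positivity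
  have hsym : ∀ i j, WM i j = WM j i := by
    intro i j
    rcases eq_or_ne i j with rfl | hij
    · rfl
    by_cases hadj' : G.Adj i j
    · rw [hadj i j hij hadj', hadj j i hij.symm hadj'.symm, min_comm]
    · rw [hnadj i j hij hadj', hnadj j i hij.symm (fun h => hadj' h.symm)]
  have hadjpos : ∀ i j, G.Adj i j → 0 < WM i j := by
    intro i j h
    rw [hadj i j (G.ne_of_adj h) h]
    exact lt_min (by positivity) (by positivity)
  have hnble : ∀ i, ∀ j ∈ G.neighborFinset i, WM i j ≤ 1 / (1 + (G.degree i : ℝ)) := by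
    intro i j hj
    rw [SimpleGraph.mem_neighborFinset] at hj
    rw [hadj i j (G.ne_of_adj hj) hj]
    exact min_le_left _ _
  have hsumnb : ∀ i, ∑ j ∈ G.neighborFinset i, WM i j
      ≤ (G.degree i : ℝ) / (1 + (G.degree i : ℝ)) := by
    intro i
    calc ∑ j ∈ G.neighborFinset i, WM i j
        ≤ (G.neighborFinset i).card • (1 / (1 + (G.degree i : ℝ))) :=
          Finset.sum_le_card_nsmul _ _ _ (hnble i)
      _ = (G.degree i : ℝ) / (1 + (G.degree i : ℝ)) := by
          rw [G.card_neighborFinset_eq_degree, nsmul_eq_mul]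
          ring
  have hdpos : ∀ i, 0 < WM i i := by
    intro i
    rw [hdiag i]
    have h1 := hsumnb i
    have h2 : (G.degree i : ℝ) / (1 + (G.degree i : ℝ)) < 1 :=
      (div_lt_one (hdeg i)).mpr (by linarith [hdeg i])
    linarith
  have hnonneg : ∀ i j, 0 ≤ WM i j := by
    intro i j
    rcases eq_or_ne i j with rfl | hij
    · exact le_of_lt (hdpos i)
    by_cases hadj' : G.Adj i j
    · exact le_of_lt (hadjpos i j hadj')
    · rw [hnadj i j hij hadj']
  have hrow : ∀ i, ∑ j, WM i j = 1 := by
    intro i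
    have hsubset : G.neighborFinset i ⊆ Finset.univ.erase i := by
      intro j hj
      rw [SimpleGraph.mem_neighborFinset] at hj
      exact Finset.mem_erase.mpr ⟨(G.ne_of_adj hj).symm, Finset.mem_univ j⟩
    have h2 : ∑ j ∈ Finset.univ.erase i, WM i j = ∑ j ∈ G.neighborFinset i, WM i j := by
      refine (Finset.sum_subset hsubset ?_).symm
      intro j hj hnj
      rw [SimpleGraph.mem_neighborFinset] at hnj
      exact hnadj i j (Ne.symm (Finset.mem_erase.mp hj).1) hnj
    have h3 : WM i i + ∑ j ∈ Finset.univ.erase i, WM i j = ∑ j, WM i j :=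
      Finset.add_sum_erase Finset.univ (fun j => WM i j) (Finset.mem_univ i)
    rw [← h3, h2, hdiag i]
    ring
  have hones : WM.mulVec (fun _ => 1) = fun _ => 1 := by
    funext i
    simp only [Matrix.mulVec, dotProduct, mul_one]
    exact hrow i
  have hT : WMᵀ = WM := by
    ext i j
    rw [transpose_apply]
    exact hsym j i
  refine ⟨hT, hnonneg, hones, ?_, hdpos, ?_⟩
  · rw [hT]; exact hones
  · -- spectral radius
    haveI : Nonempty (Fin n) := ⟨⟨0, lt_of_lt_of_le (by norm_num) hn⟩⟩
    set A := WM - Jmat n with hAdef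
    have hAT : Aᵀ = A := by
      ext i j
      simp only [hAdef, transpose_apply, Matrix.sub_apply]
      rw [hsym j i]
      rfl
    set S := {r : ℝ | ∃ μ : ℂ, μ ∈ spectrum ℂ (A.map Complex.ofReal) ∧ r = ‖μ‖}
      with hSdef
    have hfin : S.Finite := by
      have : S = (‖·‖) '' (spectrum ℂ (A.map Complex.ofReal)) := by
        ext r
        constructor
        · rintro ⟨μ, hμ, rfl⟩; exact ⟨μ, hμ, rfl⟩
        · rintro ⟨μ, hμ, rfl⟩; exact ⟨μ, hμ, rfl⟩
      rw [this]
      exact (Matrix.finite_spectrum _).image _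
    have hne : S.Nonempty := by
      obtain ⟨c, hc⟩ := Module.End.exists_eigenvalue
        (Matrix.toLinAlgEquiv' (A.map Complex.ofReal))
      exact ⟨‖c‖, c,
        by rw [← AlgEquiv.spectrum_eq Matrix.toLinAlgEquiv' (A.map Complex.ofReal)]
           exact hc.mem_spectrum, rfl⟩
    have hlt : ∀ r ∈ S, r < 1 := by
      rintro r ⟨μ, hμ, rfl⟩
      obtain ⟨t, u, hu0, hu, habs⟩ := spec_abs_bound A hAT hμ
      rw [habs]
      exact abs_eig_lt_one hn G hconn WM hsym hnonneg hrow hdpos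
        (fun i j h => hadjpos i j h) hu0 hu
    have hmem : sSup S ∈ S := Set.Nonempty.csSup_mem hne hfin
    exact hlt _ hmem
end
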